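/- arXiv:1712.05035 — 8 statements merged into one kernel-verified Lean document; each statement's English description precedes it below -/
import Mathlib

section
/- Let k ≥ 1, let 0 = t₀ < t₁ < ⋯ < t_{k−1} < t_k = ∞ and y₁,…,y_k > 0, and let η : [0,∞) → (0,∞) be the piecewise-constant function with η(t) = y_j for t ∈ [t_{j−1}, t_j). Set x_j = exp(−(t_j − t_{j−1})/y_j) for j = 1,…,k−1 and x_k = 0. Then for every integer m ≥ 2, the expected first coalescence time c_m = ∫₀^∞ t · (C(m,2)/η(t)) · exp(−C(m,2) ∫₀^t η(u)^{−1} du) dt equals (1/C(m,2)) · Σ_{j=1}^{k} y_j (∏_{l=1}^{j−1} x_l^{C(m,2)}) (1 − x_j^{C(m,2)}), where C(m,2) = m(m−1)/2 and the empty product equals 1. -/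
open MeasureTheory Real Finset

lemma aux_hasDerivAt (c d : ℝ) (hc : c ≠ 0) (u : ℝ) :
    HasDerivAt (fun v => -(Real.exp (d - c * v) * (v + 1 / c)))
      (u * c * Real.exp (d - c * u)) u := by
  have h1 : HasDerivAt (fun v : ℝ => d - c * v) (-c) u := by
    simpa using ((hasDerivAt_id u).const_mul c).const_sub d
  have h2 := (h1.exp).mul ((hasDerivAt_id u).add_const (1 / c))
  refine h2.neg.congr_deriv ?_
  have hcc : c * (1 / c) = 1 := by field_simp
  simp only [id]
  linear_combination (Real.exp (d - c * u)) * hcc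

lemma aux_tendsto (c d : ℝ) (hc : 0 < c) :
    Filter.Tendsto (fun v => -(Real.exp (d - c * v) * (v + 1 / c)))
      Filter.atTop (nhds 0) := by
  have h1 : Filter.Tendsto (fun v : ℝ => v * Real.exp (-c * v)) Filter.atTop (nhds 0) := by
    simpa using tendsto_rpow_mul_exp_neg_mul_atTop_nhds_zero 1 c hc
  have h2 : Filter.Tendsto (fun v : ℝ => Real.exp (-c * v)) Filter.atTop (nhds 0) := by
    simpa using tendsto_rpow_mul_exp_neg_mul_atTop_nhds_zero 0 c hc
  have h3 := ((h1.const_mul (Real.exp d)).add (h2.const_mul (Real.exp d * (1 / c)))).neg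
  simp only [mul_zero, add_zero, neg_zero] at h3
  convert h3 using 2 with v
  rw [show d - c * v = d + (-c * v) by ring, Real.exp_add]
  ring

lemma aux_ae_eq {f g : ℝ → ℝ} {a b : ℝ} (h : ∀ u ∈ Set.Ioo a b, f u = g u) :
    f =ᵐ[volume.restrict (Set.Ioc a b)] g := by
  have hb : ∀ᵐ u : ℝ ∂volume, u ≠ b := by
    have : {u : ℝ | ¬ u ≠ b} = {b} := by ext u; simp
    rw [MeasureTheory.ae_iff, this]
    exact measure_singleton b
  rw [Filter.EventuallyEq, MeasureTheory.ae_restrict_iff' measurableSet_Ioc]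
  filter_upwards [hb] with u hub hu
  exact h u ⟨hu.1, lt_of_le_of_ne hu.2 hub⟩

lemma aux_intervalIntegrable {f g : ℝ → ℝ} {a b : ℝ} (hab : a ≤ b)
    (h : ∀ u ∈ Set.Ioo a b, f u = g u) (hg : IntervalIntegrable g volume a b) :
    IntervalIntegrable f volume a b := by
  rw [intervalIntegrable_iff_integrableOn_Ioc_of_le hab] at *
  exact hg.congr (aux_ae_eq h).symm

lemma aux_integral_congr {f g : ℝ → ℝ} {a b : ℝ} (hab : a ≤ b)
    (h : ∀ u ∈ Set.Ioo a b, f u = g u) :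
    ∫ u in a..b, f u = ∫ u in a..b, g u := by
  rw [intervalIntegral.integral_of_le hab, intervalIntegral.integral_of_le hab]
  exact MeasureTheory.integral_congr_ae (aux_ae_eq h)

/-- cumulative integrated inverse population size at the breakpoints -/
noncomputable def auxA (t y : ℕ → ℝ) : ℕ → ℝ
  | 0 => 0
  | j + 1 => auxA t y j + (t (j + 1) - t j) / y (j + 1)

/-- For a piecewise-constant population size function `η` with `k` epochs
`[t_{j-1}, t_j)` (with `t_0 = 0`, `t_k = ∞`) and sizes `y_1, …, y_k > 0`, setting
`x_j = exp(-(t_j - t_{j-1})/y_j)` for `j = 1, …, k-1` and `x_k = 0`, the expected first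
coalescence time of a sample of size `m ≥ 2` satisfies
`c_m = (1/C(m,2)) ∑_{j=1}^k y_j (∏_{l=1}^{j-1} x_l^{C(m,2)}) (1 - x_j^{C(m,2)})`. -/
theorem expected_coalescence_time_piecewise_constant
    (k : ℕ) (hk : 1 ≤ k)
    (t : ℕ → ℝ) (ht0 : t 0 = 0)
    (htmono : ∀ j, 1 ≤ j → j ≤ k - 1 → t (j - 1) < t j)
    (y : ℕ → ℝ) (hy : ∀ j, 1 ≤ j → j ≤ k → 0 < y j)
    (η : ℝ → ℝ)
    (hη : ∀ j, 1 ≤ j → j ≤ k - 1 → ∀ s ∈ Set.Ico (t (j - 1)) (t j), η s = y j)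
    (hηlast : ∀ s, t (k - 1) ≤ s → η s = y k)
    (x : ℕ → ℝ)
    (hx : ∀ j, 1 ≤ j → j ≤ k - 1 → x j = Real.exp (-(t j - t (j - 1)) / y j))
    (hxk : x k = 0)
    (m : ℕ) (hm : 2 ≤ m) :
    (∫ s in Set.Ioi (0 : ℝ),
        s * ((m.choose 2 : ℝ) / η s) *
          Real.exp (-(m.choose 2 : ℝ) * ∫ u in (0 : ℝ)..s, (η u)⁻¹)) =
      (1 / (m.choose 2 : ℝ)) *
        ∑ j ∈ Finset.Icc 1 k,
          y j * (∏ l ∈ Finset.Icc 1 (j - 1), x l ^ m.choose 2) *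
            (1 - x j ^ m.choose 2) := by
  obtain ⟨n, rfl⟩ : ∃ n, k = n + 1 := ⟨k - 1, by omega⟩
  simp only [Nat.add_sub_cancel] at htmono hη hηlast hx
  set N := m.choose 2 with hNdef
  have hNpos : 0 < N := Nat.choose_pos hm
  have hC : (0 : ℝ) < (N : ℝ) := by exact_mod_cast hNpos
  -- basic facts about t and y
  have hstep : ∀ j < n, t j < t (j + 1) := by
    intro j hj
    have := htmono (j + 1) (by omega) (by omega)
    simpa using this
  have tmono : ∀ j, j ≤ n → ∀ i, i ≤ j → t i ≤ t j := by
    intro j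
    induction j with
    | zero => intro _ i hi; interval_cases i; exact le_refl _
    | succ p ih =>
      intro hpn i hi
      rcases Nat.lt_or_ge i (p + 1) with h | h
      · exact (ih (by omega) i (by omega)).trans (hstep p (by omega)).le
      · have : i = p + 1 := by omega
        subst this; exact le_refl _
  have htnn : ∀ j, j ≤ n → 0 ≤ t j := by
    intro j hj
    have := tmono j hj 0 (Nat.zero_le _)
    rwa [ht0] at this
  have hy' : ∀ j, j ≤ n → 0 < y (j + 1) := fun j hj => hy (j + 1) (by omega) (by omega)
  have hη' : ∀ j, j < n → ∀ s ∈ Set.Ico (t j) (t (j + 1)), η s = y (j + 1) := by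
    intro j hj s hs
    have := hη (j + 1) (by omega) (by omega) s (by simpa using hs)
    simpa using this
  -- the cumulative hazard at breakpoints
  set A : ℕ → ℝ := auxA t y with hAdef
  have hA0 : A 0 = 0 := rfl
  have hAsucc : ∀ j, A (j + 1) = A j + (t (j + 1) - t j) / y (j + 1) := fun j => rfl
  -- integrability of η⁻¹ on pieces
  have hinv_pc : ∀ j, j < n → ∀ u ∈ Set.Ioo (t j) (t (j + 1)), (η u)⁻¹ = (y (j + 1))⁻¹ := by
    intro j hj u hu
    rw [hη' j hj u ⟨hu.1.le, hu.2⟩]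
  have hIpiece : ∀ j, j < n → IntervalIntegrable (fun u => (η u)⁻¹) volume (t j) (t (j + 1)) :=
    fun j hj => aux_intervalIntegrable (hstep j hj).le (hinv_pc j hj) intervalIntegrable_const
  have hIseg : ∀ j, j ≤ n → IntervalIntegrable (fun u => (η u)⁻¹) volume 0 (t j) := by
    intro j hj
    have := IntervalIntegrable.trans_iterate (a := t) (n := j)
      (fun i hi => hIpiece i (by omega))
    rwa [ht0] at this
  -- the cumulative hazard equals A at breakpoints
  have hA : ∀ j, j ≤ n → ∫ u in (0 : ℝ)..(t j), (η u)⁻¹ = A j := by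
    intro j hj
    induction j with
    | zero => rw [ht0, intervalIntegral.integral_same, hA0]
    | succ p ih =>
      rw [← intervalIntegral.integral_add_adjacent_intervals (hIseg p (by omega))
        (hIpiece p (by omega)), ih (by omega),
        aux_integral_congr (hstep p (by omega)).le (hinv_pc p (by omega)),
        intervalIntegral.integral_const, hAsucc, smul_eq_mul, div_eq_mul_inv]
  have hAs : ∀ j, j < n → ∀ s ∈ Set.Icc (t j) (t (j + 1)),
      ∫ u in (0 : ℝ)..s, (η u)⁻¹ = A j + (s - t j) / y (j + 1) := by
    intro j hj s hs
    have hi2 : IntervalIntegrable (fun u => (η u)⁻¹) volume (t j) s :=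
      aux_intervalIntegrable hs.1
        (fun u hu => hinv_pc j hj u ⟨hu.1, lt_of_lt_of_le hu.2 hs.2⟩) intervalIntegrable_const
    rw [← intervalIntegral.integral_add_adjacent_intervals (hIseg j hj.le) hi2, hA j hj.le,
      aux_integral_congr hs.1 (fun u hu => hinv_pc j hj u ⟨hu.1, lt_of_lt_of_le hu.2 hs.2⟩),
      intervalIntegral.integral_const, smul_eq_mul, div_eq_mul_inv]
  have hAlast : ∀ s, t n ≤ s → ∫ u in (0 : ℝ)..s, (η u)⁻¹ = A n + (s - t n) / y (n + 1) := by
    intro s hs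
    have heq : ∀ u ∈ Set.Ioo (t n) s, (η u)⁻¹ = (y (n + 1))⁻¹ := by
      intro u hu; rw [hηlast u hu.1.le]
    have hi2 : IntervalIntegrable (fun u => (η u)⁻¹) volume (t n) s :=
      aux_intervalIntegrable hs heq intervalIntegrable_const
    rw [← intervalIntegral.integral_add_adjacent_intervals (hIseg n le_rfl) hi2, hA n le_rfl,
      aux_integral_congr hs heq, intervalIntegral.integral_const, smul_eq_mul, div_eq_mul_inv]
  -- abbreviations
  set f : ℝ → ℝ := fun s =>
    s * ((N : ℝ) / η s) * Real.exp (-(N : ℝ) * ∫ u in (0 : ℝ)..s, (η u)⁻¹) with hfdef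
  set cc : ℕ → ℝ := fun j => (N : ℝ) / y (j + 1) with hccdef
  set dd : ℕ → ℝ := fun j => -(N : ℝ) * A j + (N : ℝ) * t j / y (j + 1) with hdddef
  set g : ℕ → ℝ → ℝ := fun j u => u * cc j * Real.exp (dd j - cc j * u) with hgdef
  set E : ℕ → ℝ := fun j => Real.exp (-(N : ℝ) * A j) with hEdef
  have hccpos : ∀ j, j ≤ n → 0 < cc j := fun j hj => div_pos hC (hy' j hj)
  have hgcont : ∀ j, Continuous (g j) := by
    intro j
    simp only [hgdef]
    fun_prop
  -- f agrees with g j on the open pieces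
  have hfg : ∀ j, j < n → ∀ u ∈ Set.Ioo (t j) (t (j + 1)), f u = g j u := by
    intro j hj u hu
    simp only [hfdef, hgdef]
    rw [hη' j hj u ⟨hu.1.le, hu.2⟩, hAs j hj u ⟨hu.1.le, hu.2.le⟩]
    have : -(N : ℝ) * (A j + (u - t j) / y (j + 1)) = dd j - cc j * u := by
      simp only [hdddef, hccdef]
      field_simp
      ring
    rw [this]
  have hfglast : ∀ u ∈ Set.Ioi (t n), f u = g n u := by
    intro u hu
    simp only [hfdef, hgdef]
    rw [hηlast u (le_of_lt hu), hAlast u (le_of_lt hu)]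
    have : -(N : ℝ) * (A n + (u - t n) / y (n + 1)) = dd n - cc n * u := by
      simp only [hdddef, hccdef]
      field_simp
      ring
    rw [this]
  -- value of each finite piece
  have hexp_tj : ∀ j, j ≤ n → dd j - cc j * t j = -(N : ℝ) * A j := by
    intro j hj
    simp only [hdddef, hccdef]
    field_simp
    ring
  have hexp_tj1 : ∀ j, j < n → dd j - cc j * t (j + 1) = -(N : ℝ) * A (j + 1) := by
    intro j hj
    simp only [hdddef, hccdef, hAsucc]
    have := (hy' j hj.le).ne'
    field_simp
    ring
  have hinvcc : ∀ j, j ≤ n → 1 / cc j = y (j + 1) / (N : ℝ) := by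
    intro j hj
    simp only [hccdef]
    rw [one_div_div]
  have hpiece : ∀ j, j < n → ∫ s in (t j)..(t (j + 1)), f s =
      E j * (t j + y (j + 1) / (N : ℝ)) - E (j + 1) * (t (j + 1) + y (j + 1) / (N : ℝ)) := by
    intro j hj
    rw [aux_integral_congr (hstep j hj).le (hfg j hj)]
    have hFTC := intervalIntegral.integral_eq_sub_of_hasDerivAt
      (a := t j) (b := t (j + 1))
      (f := fun v => -(Real.exp (dd j - cc j * v) * (v + 1 / cc j)))
      (f' := g j)
      (fun u _ => aux_hasDerivAt (cc j) (dd j) (hccpos j hj.le).ne' u)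
      ((hgcont j).intervalIntegrable _ _)
    rw [hFTC]
    simp only [hexp_tj j hj.le, hexp_tj1 j hj, hinvcc j hj.le, hEdef]
    ring
  -- last piece
  have hlast_deriv : ∀ u ∈ Set.Ioi (t n),
      HasDerivAt (fun v => -(Real.exp (dd n - cc n * v) * (v + 1 / cc n))) (g n u) u :=
    fun u _ => aux_hasDerivAt (cc n) (dd n) (hccpos n le_rfl).ne' u
  have hlast_cont : ContinuousWithinAt
      (fun v => -(Real.exp (dd n - cc n * v) * (v + 1 / cc n))) (Set.Ici (t n)) (t n) :=
    (aux_hasDerivAt (cc n) (dd n) (hccpos n le_rfl).ne' (t n)).continuousAt.continuousWithinAt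
  have hlast_nonneg : ∀ u ∈ Set.Ioi (t n), 0 ≤ g n u := by
    intro u hu
    have hu0 : 0 ≤ u := le_trans (htnn n le_rfl) (le_of_lt hu)
    simp only [hgdef]
    exact mul_nonneg (mul_nonneg hu0 (hccpos n le_rfl).le) (Real.exp_nonneg _)
  have hlast_tendsto := aux_tendsto (cc n) (dd n) (hccpos n le_rfl)
  have hlast_val : ∫ s in Set.Ioi (t n), f s = E n * (t n + y (n + 1) / (N : ℝ)) := by
    rw [setIntegral_congr_fun measurableSet_Ioi hfglast]
    rw [integral_Ioi_of_hasDerivAt_of_nonneg hlast_cont hlast_deriv hlast_nonneg hlast_tendsto]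
    simp only [hexp_tj n le_rfl, hinvcc n le_rfl, hEdef]
    ring
  -- integrability
  have hglast_int : IntegrableOn (g n) (Set.Ioi (t n)) volume :=
    integrableOn_Ioi_deriv_of_nonneg hlast_cont hlast_deriv hlast_nonneg hlast_tendsto
  have hf_Ioi : IntegrableOn f (Set.Ioi (t n)) volume :=
    hglast_int.congr_fun (fun u hu => (hfglast u hu).symm) measurableSet_Ioi
  have hf_pieces : ∀ j, j < n → IntervalIntegrable f volume (t j) (t (j + 1)) :=
    fun j hj => aux_intervalIntegrable (hstep j hj).le (hfg j hj)
      ((hgcont j).intervalIntegrable _ _)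
  have hf_seg : IntervalIntegrable f volume 0 (t n) := by
    have := IntervalIntegrable.trans_iterate (a := t) (n := n)
      (fun i hi => hf_pieces i hi)
    rwa [ht0] at this
  have hf_Ioc : IntegrableOn f (Set.Ioc 0 (t n)) volume :=
    (intervalIntegrable_iff_integrableOn_Ioc_of_le (htnn n le_rfl)).1 hf_seg
  -- split the integral
  have hsplit : ∫ s in Set.Ioi (0 : ℝ), f s =
      (∫ s in Set.Ioc (0 : ℝ) (t n), f s) + ∫ s in Set.Ioi (t n), f s := by
    rw [← Set.Ioc_union_Ioi_eq_Ioi (htnn n le_rfl),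
      setIntegral_union (Set.Ioc_disjoint_Ioi le_rfl) measurableSet_Ioi hf_Ioc hf_Ioi]
  have hsum : ∫ s in Set.Ioc (0 : ℝ) (t n), f s =
      ∑ i ∈ Finset.range n,
        (E i * (t i + y (i + 1) / (N : ℝ)) - E (i + 1) * (t (i + 1) + y (i + 1) / (N : ℝ))) := by
    rw [← intervalIntegral.integral_of_le (htnn n le_rfl)]
    have hadj := intervalIntegral.sum_integral_adjacent_intervals (a := t) (μ := volume)
      (f := f) (n := n) (fun i hi => hf_pieces i hi)
    rw [ht0] at hadj
    rw [← hadj]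
    exact Finset.sum_congr rfl fun i hi => hpiece i (Finset.mem_range.1 hi)
  -- products of x's
  have hx' : ∀ i, i < n → x (i + 1) = Real.exp (-(t (i + 1) - t i) / y (i + 1)) := by
    intro i hi
    have := hx (i + 1) (by omega) (by omega)
    simpa using this
  have hPx : ∀ i, i < n → E i * x (i + 1) ^ N = E (i + 1) := by
    intro i hi
    rw [hx' i hi, ← Real.exp_nat_mul]
    simp only [hEdef]
    rw [← Real.exp_add, hAsucc]
    congr 1
    rw [div_eq_mul_inv, div_eq_mul_inv]
    ring
  have hP : ∀ j, j ≤ n → ∏ l ∈ Finset.Icc 1 j, x l ^ N = E j := by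
    intro j hj
    induction j with
    | zero =>
      simp only [hEdef, hA0]
      norm_num
    | succ p ih =>
      rw [Finset.prod_Icc_succ_top (by omega : 1 ≤ p + 1), ih (by omega),
        hPx p (by omega)]
  -- assemble
  show ∫ s in Set.Ioi (0 : ℝ), f s = _
  rw [hsplit, hsum, hlast_val]
  -- right-hand side
  rw [← Finset.Ico_add_one_right_eq_Icc, Finset.sum_Ico_eq_sum_range]
  simp only [Nat.add_sub_cancel_left, Nat.succ_sub_one, Nat.add_sub_cancel]
  rw [Finset.sum_range_succ]
  have hterm : ∀ i ∈ Finset.range n,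
      y (1 + i) * (∏ l ∈ Finset.Icc 1 i, x l ^ N) * (1 - x (1 + i) ^ N) =
        (y (i + 1) * E i - y (i + 1) * E (i + 1)) := by
    intro i hi
    have hi' := Finset.mem_range.1 hi
    have h2 : 1 + i = i + 1 := by omega
    rw [h2, hP i hi'.le, ← hPx i hi']
    ring
  have hlastterm : y (1 + n) * (∏ l ∈ Finset.Icc 1 n, x l ^ N) * (1 - x (1 + n) ^ N) =
      y (n + 1) * E n := by
    have h2 : 1 + n = n + 1 := by omega
    rw [h2, hP n le_rfl, hxk, zero_pow hNpos.ne']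
    ring
  rw [Finset.sum_congr rfl hterm, hlastterm]
  -- left-hand side sum: telescoping
  have hLsum : ∀ i ∈ Finset.range n,
      E i * (t i + y (i + 1) / (N : ℝ)) - E (i + 1) * (t (i + 1) + y (i + 1) / (N : ℝ)) =
        (E i * t i - E (i + 1) * t (i + 1)) +
          (1 / (N : ℝ)) * (y (i + 1) * E i - y (i + 1) * E (i + 1)) := by
    intro i _
    ring
  rw [Finset.sum_congr rfl hLsum, Finset.sum_add_distrib,
    Finset.sum_range_sub' (fun i => E i * t i), ← Finset.mul_sum, ht0]
  ring
end

section
/- Let k ≥ 1, let 0 = t₀ < t₁ < ⋯ < t_{k−1} < t_k = ∞ and y₁,…,y_k > 0, and let η : [0,∞) → (0,∞) be the piecewise-constant function with η(t) = y_j for t ∈ [t_{j−1}, t_j). Set x_j = exp(−(t_j − t_{j−1})/y_j) for j = 1,…,k−1, and set y₀ = 0. Then for every integer m ≥ 2, the expected first coalescence time c_m = ∫₀^∞ t · (C(m,2)/η(t)) · exp(−C(m,2) ∫₀^t η(u)^{−1} du) dt equals (1/C(m,2)) · Σ_{j=1}^{k} (y_j − y_{j−1}) ∏_{l=1}^{j−1}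 x_l^{C(m,2)}, where the empty product equals 1. -/
open MeasureTheory Real Finset

namespace CoalAux

open Set Filter Topology

lemma hasDeriv (a b : ℝ) (hb : 0 < b) (s : ℝ) :
    HasDerivAt (fun s => -(s + 1 / b) * Real.exp (-b * (s - a)))
      (s * b * Real.exp (-b * (s - a))) s := by
  have h1 : HasDerivAt (fun s : ℝ => -(s + 1 / b)) (-1) s := by
    exact ((hasDerivAt_id s).add_const (1 / b)).neg
  have h2 : HasDerivAt (fun s : ℝ => Real.exp (-b * (s - a)))
      (Real.exp (-b * (s - a)) * (-b)) s := by
    have hu : HasDerivAt (fun s : ℝ => -b * (s - a)) (-b) s := by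
      simpa using ((hasDerivAt_id s).sub_const a).const_mul (-b)
    exact (Real.hasDerivAt_exp _).comp s hu
  have : HasDerivAt (fun s => -(s + 1 / b) * Real.exp (-b * (s - a))) _ s := h1.mul h2
  convert this using 1
  have hb' : b ≠ 0 := hb.ne'
  have hbb : (1 / b) * b = 1 := by field_simp
  linear_combination (-Real.exp (-b * (s - a))) * hbb

lemma tendstoZero (a b : ℝ) (hb : 0 < b) :
    Tendsto (fun s => -(s + 1 / b) * Real.exp (-b * (s - a))) atTop (nhds 0) := by
  have hbx : Tendsto (fun x : ℝ => b * x) atTop atTop :=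
    Tendsto.const_mul_atTop hb tendsto_id
  have e1 : Tendsto (fun x : ℝ => (b * x) ^ 1 * Real.exp (-(b * x))) atTop (nhds 0) :=
    (Real.tendsto_pow_mul_exp_neg_atTop_nhds_zero 1).comp hbx
  have e2 : Tendsto (fun x : ℝ => Real.exp (-(b * x))) atTop (nhds 0) :=
    Real.tendsto_exp_neg_atTop_nhds_zero.comp hbx
  have key : Tendsto (fun x : ℝ =>
      -(Real.exp (b * a)) * ((1 / b) * ((b * x) ^ 1 * Real.exp (-(b * x)))
        + (1 / b) * Real.exp (-(b * x)))) atTop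
      (nhds (-(Real.exp (b * a)) * ((1 / b) * 0 + (1 / b) * 0))) :=
    Tendsto.const_mul _ ((Tendsto.const_mul _ e1).add (Tendsto.const_mul _ e2))
  simp only [mul_zero, add_zero, zero_add] at key
  refine key.congr fun x => ?_
  have hexp : Real.exp (b * a) * Real.exp (-(b * x)) = Real.exp (-b * (x - a)) := by
    rw [← Real.exp_add]; congr 1; ring
  rw [← hexp]
  field_simp

lemma halfline (a b : ℝ) (ha : 0 ≤ a) (hb : 0 < b) :
    IntegrableOn (fun s => s * b * Real.exp (-b * (s - a))) (Set.Ioi a) volume ∧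
    ∫ s in Set.Ioi a, s * b * Real.exp (-b * (s - a)) = a + 1 / b := by
  have hd := fun s (_ : s ∈ Set.Ici a) => hasDeriv a b hb s
  have hpos : ∀ s ∈ Set.Ioi a, 0 ≤ s * b * Real.exp (-b * (s - a)) := fun s hs =>
    mul_nonneg (mul_nonneg (le_trans ha (le_of_lt hs)) hb.le) (Real.exp_pos _).le
  refine ⟨integrableOn_Ioi_deriv_of_nonneg' hd hpos (tendstoZero a b hb), ?_⟩
  rw [integral_Ioi_of_hasDerivAt_of_nonneg' hd hpos (tendstoZero a b hb)]
  have h0 : -b * (a - a) = 0 := by ring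
  show 0 - -(a + 1 / b) * Real.exp (-b * (a - a)) = a + 1 / b
  rw [h0, Real.exp_zero]
  ring

lemma finiteInterval (a c b : ℝ) (hb : 0 < b) :
    ∫ s in a..c, s * b * Real.exp (-b * (s - a)) =
      (a + 1 / b) - (c + 1 / b) * Real.exp (-b * (c - a)) := by
  have hcont : Continuous (fun s : ℝ => s * b * Real.exp (-b * (s - a))) := by
    continuity
  have := intervalIntegral.integral_eq_sub_of_hasDerivAt
    (f := fun s => -(s + 1 / b) * Real.exp (-b * (s - a)))
    (fun s _ => hasDeriv a b hb s) (hcont.intervalIntegrable a c)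
  rw [this]
  show -(c + 1 / b) * Real.exp (-b * (c - a)) - -(a + 1 / b) * Real.exp (-b * (a - a))
      = a + 1 / b - (c + 1 / b) * Real.exp (-b * (c - a))
  have h0 : -b * (a - a) = 0 := by ring
  rw [h0, Real.exp_zero]
  ring

/-- `x_l ^ n` written multiplicatively inside the exponential. -/
noncomputable def X (n : ℝ) (t y : ℕ → ℝ) (l : ℕ) : ℝ :=
  Real.exp (-(n / y l) * (t l - t (l - 1)))

/-- The value of the tail integral starting at `t (i-1)`, divided by the survival factor. -/
noncomputable def V (n : ℝ) (t y : ℕ → ℝ) (k i : ℕ) : ℝ :=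
  t (i - 1) + (1 / n) * (y i +
    ∑ p ∈ Finset.Icc (i + 1) k, (y p - y (p - 1)) * ∏ l ∈ Finset.Icc i (p - 1), X n t y l)

lemma V_last (n : ℝ) (t y : ℕ → ℝ) (k : ℕ) :
    V n t y k k = t (k - 1) + (1 / n) * y k := by
  unfold V
  rw [Finset.Icc_eq_empty (by omega), Finset.sum_empty, add_zero]

lemma V_step (n : ℝ) (hn : 0 < n) (t y : ℕ → ℝ) (k i : ℕ) (h1 : 1 ≤ i) (hik : i + 1 ≤ k)
    (hyi : y i ≠ 0) :
    (t (i - 1) + 1 / (n / y i)) - (t i + 1 / (n / y i)) * X n t y i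
      + X n t y i * V n t y k (i + 1) = V n t y k i := by
  unfold V
  simp only [Nat.add_sub_cancel]
  have hsplit : Finset.Icc (i + 1) k = insert (i + 1) (Finset.Icc (i + 2) k) := by
    ext p; simp only [Finset.mem_Icc, Finset.mem_insert]; omega
  rw [hsplit, Finset.sum_insert (by simp only [Finset.mem_Icc]; omega)]
  simp only [Nat.add_sub_cancel, Finset.Icc_self, Finset.prod_singleton]
  have hprod : ∀ p ∈ Finset.Icc (i + 2) k,
      (y p - y (p - 1)) * ∏ l ∈ Finset.Icc i (p - 1), X n t y l
        = X n t y i * ((y p - y (p - 1)) * ∏ l ∈ Finset.Icc (i + 1) (p - 1), X n t y l) := by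
    intro p hp
    simp only [Finset.mem_Icc] at hp
    have hins : Finset.Icc i (p - 1) = insert i (Finset.Icc (i + 1) (p - 1)) := by
      ext l; simp only [Finset.mem_Icc, Finset.mem_insert]; omega
    rw [hins, Finset.prod_insert (by simp only [Finset.mem_Icc]; omega)]
    ring
  rw [Finset.sum_congr rfl hprod, ← Finset.mul_sum]
  have hn' : n ≠ 0 := hn.ne'
  field_simp
  ring

end CoalAux

/-- (Telescoped formulation, equation (2)) For a piecewise-constant population
size function `η` with `k` epochs `[t_{j-1}, t_j)` (with `t_0 = 0`, `t_k = ∞`) and sizes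
`y_1, …, y_k > 0`, setting `x_j = exp(-(t_j - t_{j-1})/y_j)` for `j = 1, …, k-1` and `y_0 = 0`,
the expected first coalescence time of a sample of size `m ≥ 2` satisfies
`c_m = (1/C(m,2)) ∑_{j=1}^k (y_j - y_{j-1}) ∏_{l=1}^{j-1} x_l^{C(m,2)}`. -/
theorem expected_coalescence_time_piecewise_constant_telescoped
    (k : ℕ) (hk : 1 ≤ k)
    (t : ℕ → ℝ) (ht0 : t 0 = 0)
    (htmono : ∀ j, 1 ≤ j → j ≤ k - 1 → t (j - 1) < t j)
    (y : ℕ → ℝ) (hy0 : y 0 = 0) (hy : ∀ j, 1 ≤ j → j ≤ k → 0 < y j)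
    (η : ℝ → ℝ)
    (hη : ∀ j, 1 ≤ j → j ≤ k - 1 → ∀ s ∈ Set.Ico (t (j - 1)) (t j), η s = y j)
    (hηlast : ∀ s, t (k - 1) ≤ s → η s = y k)
    (x : ℕ → ℝ)
    (hx : ∀ j, 1 ≤ j → j ≤ k - 1 → x j = Real.exp (-(t j - t (j - 1)) / y j))
    (m : ℕ) (hm : 2 ≤ m) :
    (∫ s in Set.Ioi (0 : ℝ),
        s * ((m.choose 2 : ℝ) / η s) *
          Real.exp (-(m.choose 2 : ℝ) * ∫ u in (0 : ℝ)..s, (η u)⁻¹)) =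
      (1 / (m.choose 2 : ℝ)) *
        ∑ j ∈ Finset.Icc 1 k,
          (y j - y (j - 1)) * ∏ l ∈ Finset.Icc 1 (j - 1), x l ^ m.choose 2 := by
  classical
  set n : ℝ := (m.choose 2 : ℝ) with hn_def
  have hcn : 0 < m.choose 2 := Nat.choose_pos hm
  have hn : 0 < n := by rw [hn_def]; exact_mod_cast hcn
  -- monotonicity and nonnegativity of the epoch boundaries
  have tmono : ∀ i j : ℕ, i ≤ j → j ≤ k - 1 → t i ≤ t j := by
    intro i j hij hjk
    induction j with
    | zero => simp_all
    | succ jj ih =>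
      rcases Nat.eq_or_lt_of_le hij with h | h
      · rw [h]
      · have hlt : t ((jj + 1) - 1) < t (jj + 1) := htmono (jj + 1) (by omega) hjk
        simp only [Nat.add_sub_cancel] at hlt
        exact le_trans (ih (by omega) (by omega)) hlt.le
  have tnonneg : ∀ j, j ≤ k - 1 → 0 ≤ t j := by
    intro j hj
    rw [← ht0]
    exact tmono 0 j (Nat.zero_le j) hj
  -- integrability of 1/η on bounded intervals of [0, ∞)
  have hIoc : ∀ j, j ≤ k - 1 → IntegrableOn (fun u => (η u)⁻¹) (Set.Ioc 0 (t j)) volume := by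
    intro j hj
    induction j with
    | zero => rw [ht0, Set.Ioc_self]; exact integrableOn_empty
    | succ jj ih =>
      have hjj : jj ≤ k - 1 := by omega
      have hlt : t jj < t (jj + 1) := by
        have := htmono (jj + 1) (by omega) hj
        simpa only [Nat.add_sub_cancel] using this
      have h1 : IntegrableOn (fun u => (η u)⁻¹) (Set.Ioc (t jj) (t (jj + 1))) volume := by
        rw [integrableOn_Ioc_iff_integrableOn_Ioo]
        refine MeasureTheory.IntegrableOn.congr_fun (f := fun _ => (y (jj + 1))⁻¹)
          (integrableOn_const measure_Ioo_lt_top.ne) (fun u hu => ?_) measurableSet_Ioo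
        have : η u = y (jj + 1) := by
          have := hη (jj + 1) (by omega) hj u ⟨by simpa using hu.1.le, by simpa using hu.2⟩
          simpa only [Nat.add_sub_cancel] using this
        rw [this]
      have hun : Set.Ioc 0 (t jj) ∪ Set.Ioc (t jj) (t (jj + 1)) = Set.Ioc 0 (t (jj + 1)) :=
        Set.Ioc_union_Ioc_eq_Ioc (tnonneg jj hjj) hlt.le
      rw [← hun]
      exact (ih hjj).union h1
  have hII : ∀ a c : ℝ, 0 ≤ a → IntegrableOn (fun u => (η u)⁻¹) (Set.Ioc a c) volume := by
    intro a c ha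
    have hsub : Set.Ioc a c ⊆ Set.Ioc 0 c := Set.Ioc_subset_Ioc_left ha
    rcases le_total c (t (k - 1)) with h | h
    · exact ((hIoc (k - 1) le_rfl).mono_set (Set.Ioc_subset_Ioc_right h)).mono_set hsub
    · have h2 : IntegrableOn (fun u => (η u)⁻¹) (Set.Ioc (t (k - 1)) c) volume := by
        refine MeasureTheory.IntegrableOn.congr_fun (f := fun _ => (y k)⁻¹)
          (integrableOn_const measure_Ioc_lt_top.ne) (fun u hu => ?_) measurableSet_Ioc
        rw [hηlast u hu.1.le]
      have hun : Set.Ioc 0 (t (k - 1)) ∪ Set.Ioc (t (k - 1)) c = Set.Ioc 0 c :=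
        Set.Ioc_union_Ioc_eq_Ioc (tnonneg (k - 1) le_rfl) h
      exact (hun ▸ ((hIoc (k - 1) le_rfl).union h2)).mono_set hsub
  have hIIint : ∀ a c : ℝ, 0 ≤ a → a ≤ c → IntervalIntegrable (fun u => (η u)⁻¹) volume a c :=
    fun a c ha hac => (intervalIntegrable_iff_integrableOn_Ioc_of_le hac).2 (hII a c ha)
  have hAdd : ∀ a s : ℝ, 0 ≤ a → a ≤ s →
      (∫ u in (0 : ℝ)..s, (η u)⁻¹) = (∫ u in (0 : ℝ)..a, (η u)⁻¹) + ∫ u in a..s, (η u)⁻¹ :=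
    fun a s ha has =>
      (intervalIntegral.integral_add_adjacent_intervals (hIIint 0 a le_rfl ha)
        (hIIint a s ha has)).symm
  -- the value of ∫ 1/η over one epoch
  have hLamB : ∀ i, 1 ≤ i → i ≤ k - 1 → ∀ s, t (i - 1) ≤ s → s ≤ t i →
      (∫ u in (t (i - 1))..s, (η u)⁻¹) = (s - t (i - 1)) / y i := by
    intro i h1 h2 s hs1 hs2
    rw [intervalIntegral.integral_of_le hs1, MeasureTheory.integral_Ioc_eq_integral_Ioo,
      MeasureTheory.setIntegral_congr_fun (g := fun _ => (y i)⁻¹) measurableSet_Ioo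
        (fun u hu => by rw [hη i h1 h2 u ⟨hu.1.le, lt_of_lt_of_le hu.2 hs2⟩])]
    rw [setIntegral_const, Real.volume_real_Ioo_of_le hs1, smul_eq_mul,
      div_eq_mul_inv]
  have hLamLast : ∀ s, t (k - 1) ≤ s →
      (∫ u in (t (k - 1))..s, (η u)⁻¹) = (s - t (k - 1)) / y k := by
    intro s hs
    rw [intervalIntegral.integral_of_le hs,
      MeasureTheory.setIntegral_congr_fun (g := fun _ => (y k)⁻¹) measurableSet_Ioc
        (fun u hu => by rw [hηlast u hu.1.le])]
    rw [setIntegral_const, Real.volume_real_Ioc_of_le hs, smul_eq_mul,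
      div_eq_mul_inv]
  -- the main downward induction over epochs
  have main : ∀ d i : ℕ, 1 ≤ i → i = k - d →
      IntegrableOn (fun s => s * (n / η s) *
          Real.exp (-n * ∫ u in (0 : ℝ)..s, (η u)⁻¹)) (Set.Ioi (t (i - 1))) volume ∧
      (∫ s in Set.Ioi (t (i - 1)), s * (n / η s) *
          Real.exp (-n * ∫ u in (0 : ℝ)..s, (η u)⁻¹))
        = Real.exp (-n * ∫ u in (0 : ℝ)..(t (i - 1)), (η u)⁻¹) * CoalAux.V n t y k i := by
    intro d
    induction d with
    | zero =>
      intro i h1 h2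
      have hik : i = k := by omega
      subst hik
      have ha : 0 ≤ t (i - 1) := tnonneg (i - 1) (by omega)
      have hyk : 0 < y i := hy i h1 le_rfl
      have hb : 0 < n / y i := div_pos hn hyk
      have heq : Set.EqOn
          (fun s => Real.exp (-n * ∫ u in (0 : ℝ)..(t (i - 1)), (η u)⁻¹) *
            (s * (n / y i) * Real.exp (-(n / y i) * (s - t (i - 1)))))
          (fun s => s * (n / η s) * Real.exp (-n * ∫ u in (0 : ℝ)..s, (η u)⁻¹))
          (Set.Ioi (t (i - 1))) := by
        intro s hs
        have hs' : t (i - 1) ≤ s := le_of_lt hs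
        simp only
        rw [hηlast s hs', hAdd (t (i - 1)) s ha hs', hLamLast s hs', mul_add, Real.exp_add]
        have harg : -(n / y i) * (s - t (i - 1)) = -n * ((s - t (i - 1)) / y i) := by ring
        rw [harg]
        ring
      have hhalf := CoalAux.halfline (t (i - 1)) (n / y i) ha hb
      refine ⟨MeasureTheory.IntegrableOn.congr_fun
        (hhalf.1.const_mul (Real.exp (-n * ∫ u in (0 : ℝ)..(t (i - 1)), (η u)⁻¹)))
        heq measurableSet_Ioi, ?_⟩
      rw [← MeasureTheory.setIntegral_congr_fun measurableSet_Ioi heq,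
        MeasureTheory.integral_const_mul, hhalf.2, CoalAux.V_last]
      congr 1
      rw [one_div_div]
      ring
    | succ d ih =>
      intro i h1 h2
      have hik : i ≤ k - 1 := by omega
      obtain ⟨ihInt, ihVal⟩ := ih (i + 1) (by omega) (by omega)
      simp only [Nat.add_sub_cancel] at ihInt ihVal
      have hab : t (i - 1) < t i := htmono i h1 hik
      have ha : 0 ≤ t (i - 1) := tnonneg (i - 1) (by omega)
      have hyi : 0 < y i := hy i h1 (by omega)
      have hb : 0 < n / y i := div_pos hn hyi
      have heq : Set.EqOn
          (fun s => Real.exp (-n * ∫ u in (0 : ℝ)..(t (i - 1)), (η u)⁻¹) *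
            (s * (n / y i) * Real.exp (-(n / y i) * (s - t (i - 1)))))
          (fun s => s * (n / η s) * Real.exp (-n * ∫ u in (0 : ℝ)..s, (η u)⁻¹))
          (Set.Ioo (t (i - 1)) (t i)) := by
        intro s hs
        simp only
        rw [hη i h1 hik s ⟨hs.1.le, hs.2⟩, hAdd (t (i - 1)) s ha hs.1.le,
          hLamB i h1 hik s hs.1.le hs.2.le, mul_add, Real.exp_add]
        have harg : -(n / y i) * (s - t (i - 1)) = -n * ((s - t (i - 1)) / y i) := by ring
        rw [harg]
        ring
      have hcont : Continuous (fun s : ℝ =>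
          Real.exp (-n * ∫ u in (0 : ℝ)..(t (i - 1)), (η u)⁻¹) *
            (s * (n / y i) * Real.exp (-(n / y i) * (s - t (i - 1))))) := by
        fun_prop
      have hint1 : IntegrableOn
          (fun s => s * (n / η s) * Real.exp (-n * ∫ u in (0 : ℝ)..s, (η u)⁻¹))
          (Set.Ioc (t (i - 1)) (t i)) volume := by
        rw [integrableOn_Ioc_iff_integrableOn_Ioo]
        exact (hcont.integrableOn_Icc.mono_set Set.Ioo_subset_Icc_self).congr_fun heq
          measurableSet_Ioo
      have hval1 : (∫ s in Set.Ioc (t (i - 1)) (t i),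
            s * (n / η s) * Real.exp (-n * ∫ u in (0 : ℝ)..s, (η u)⁻¹))
          = Real.exp (-n * ∫ u in (0 : ℝ)..(t (i - 1)), (η u)⁻¹) *
              ((t (i - 1) + 1 / (n / y i)) -
                (t i + 1 / (n / y i)) * Real.exp (-(n / y i) * (t i - t (i - 1)))) := by
        rw [MeasureTheory.integral_Ioc_eq_integral_Ioo,
          ← MeasureTheory.setIntegral_congr_fun measurableSet_Ioo heq,
          ← MeasureTheory.integral_Ioc_eq_integral_Ioo,
          ← intervalIntegral.integral_of_le hab.le,
          intervalIntegral.integral_const_mul, CoalAux.finiteInterval _ _ _ hb]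
      have hunion : Set.Ioc (t (i - 1)) (t i) ∪ Set.Ioi (t i) = Set.Ioi (t (i - 1)) :=
        Set.Ioc_union_Ioi_eq_Ioi hab.le
      refine ⟨by rw [← hunion]; exact hint1.union ihInt, ?_⟩
      rw [← hunion,
        MeasureTheory.setIntegral_union (Set.Ioc_disjoint_Ioi le_rfl) measurableSet_Ioi hint1 ihInt,
        hval1, ihVal]
      have hLi : (∫ u in (0 : ℝ)..(t i), (η u)⁻¹)
          = (∫ u in (0 : ℝ)..(t (i - 1)), (η u)⁻¹) + (t i - t (i - 1)) / y i := by
        rw [hAdd (t (i - 1)) (t i) ha hab.le, hLamB i h1 hik (t i) hab.le le_rfl]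
      rw [hLi, mul_add, Real.exp_add]
      have harg : -n * ((t i - t (i - 1)) / y i) = -(n / y i) * (t i - t (i - 1)) := by ring
      rw [harg]
      have hstep := CoalAux.V_step n hn t y k i h1 (by omega) hyi.ne'
      unfold CoalAux.X at hstep
      rw [← hstep]
      ring
  -- apply the induction at i = 1 and rewrite into the stated form
  obtain ⟨-, hval⟩ := main (k - 1) 1 le_rfl (by omega)
  have h10 : (1 : ℕ) - 1 = 0 := rfl
  rw [h10, ht0, intervalIntegral.integral_same, mul_zero, Real.exp_zero, one_mul] at hval
  rw [hval]
  unfold CoalAux.V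
  rw [h10, ht0]
  have hsplit : Finset.Icc 1 k = insert 1 (Finset.Icc 2 k) := by
    ext p; simp only [Finset.mem_Icc, Finset.mem_insert]; omega
  rw [hsplit, Finset.sum_insert (by simp only [Finset.mem_Icc]; omega)]
  have h1term : (y 1 - y (1 - 1)) * ∏ l ∈ Finset.Icc 1 (1 - 1), x l ^ m.choose 2 = y 1 := by
    rw [h10, hy0, Finset.Icc_eq_empty (by omega), Finset.prod_empty]
    ring
  rw [h1term]
  have hsum : ∀ p ∈ Finset.Icc 2 k,
      (y p - y (p - 1)) * ∏ l ∈ Finset.Icc 1 (p - 1), x l ^ m.choose 2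
        = (y p - y (p - 1)) * ∏ l ∈ Finset.Icc 1 (p - 1), CoalAux.X n t y l := by
    intro p hp
    simp only [Finset.mem_Icc] at hp
    congr 1
    refine Finset.prod_congr rfl fun l hl => ?_
    simp only [Finset.mem_Icc] at hl
    rw [hx l hl.1 (by omega), ← Real.exp_nat_mul]
    unfold CoalAux.X
    congr 1
    rw [← hn_def]
    ring
  rw [Finset.sum_congr rfl hsum]
  ring
end

section
/- For every integer k ≥ 2, the coalescence manifold for sample size 3 satisfies C_{3,k} = { (a,b) ∈ ℝ² : a > 0 and 0 < b < a }; in particular C_{3,k} = C_{3,2} for all k ≥ 2. -/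
open Finset

/-- The map `χ_{n,k}` specialized to sample size `n = 3` (coordinates `m = 2, 3` with
`C(2,2) = 1` and `C(3,2) = 3`), with the convention `x_k = 0`. -/
noncomputable def chi3 (k : ℕ) (x y : ℕ → ℝ) : Fin 2 → ℝ :=
  fun i =>
    (1 / ((i.val + 2).choose 2 : ℝ)) *
      ∑ j ∈ Finset.Icc 1 k,
        y j * (∏ l ∈ Finset.Icc 1 (j - 1), x l ^ (i.val + 2).choose 2) *
          (1 - (if j = k then (0 : ℝ) else x j) ^ (i.val + 2).choose 2)

/-- The coalescence manifold `C_{3,k} ⊆ ℝ²`. -/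
def Coal3 (k : ℕ) : Set (Fin 2 → ℝ) :=
  { c | ∃ x y : ℕ → ℝ,
      (∀ j, 1 ≤ j → j ≤ k - 1 → 0 < x j ∧ x j < 1) ∧
      (∀ j, 1 ≤ j → j ≤ k → 0 < y j) ∧
      c = chi3 k x y }

/-- The key termwise inequality `y P³ (1-q³) < 3 y P (1-q)`. -/
lemma coal3_key_ineq (y P q : ℝ) (hy : 0 < y) (hP0 : 0 < P) (hP1 : P ≤ 1)
    (hq0 : 0 ≤ q) (hq1 : q < 1) :
    y * P ^ 3 * (1 - q ^ 3) < 3 * (y * P * (1 - q)) := by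
  have h1 : 0 < 1 - q := by linarith
  have hq2 : q ^ 2 < 1 := by nlinarith
  have hP2 : P ^ 2 ≤ 1 := by nlinarith
  have h3 : 0 < 3 - P ^ 2 * (1 + q + q ^ 2) := by nlinarith
  have := mul_pos (mul_pos (mul_pos hy hP0) h1) h3
  nlinarith [this]

/-- Forward direction: every point of `Coal3 k` satisfies the inequalities. -/
lemma coal3_forward (k : ℕ) (hk : 2 ≤ k) (x y : ℕ → ℝ)
    (hx : ∀ j, 1 ≤ j → j ≤ k - 1 → 0 < x j ∧ x j < 1)
    (hy : ∀ j, 1 ≤ j → j ≤ k → 0 < y j) :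
    0 < chi3 k x y 0 ∧ 0 < chi3 k x y 1 ∧ chi3 k x y 1 < chi3 k x y 0 := by
  have hne : (Finset.Icc 1 k).Nonempty := ⟨1, by simp; omega⟩
  have hP0 : ∀ j ∈ Finset.Icc 1 k, 0 < ∏ l ∈ Finset.Icc 1 (j-1), x l := by
    intro j hj
    simp only [Finset.mem_Icc] at hj
    apply Finset.prod_pos
    intro l hl
    simp only [Finset.mem_Icc] at hl
    exact (hx l hl.1 (by omega)).1
  have hP1 : ∀ j ∈ Finset.Icc 1 k, ∏ l ∈ Finset.Icc 1 (j-1), x l ≤ 1 := by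
    intro j hj
    simp only [Finset.mem_Icc] at hj
    apply Finset.prod_le_one
    · intro l hl
      simp only [Finset.mem_Icc] at hl
      exact (hx l hl.1 (by omega)).1.le
    · intro l hl
      simp only [Finset.mem_Icc] at hl
      exact (hx l hl.1 (by omega)).2.le
  have hq0 : ∀ j ∈ Finset.Icc 1 k, 0 ≤ (if j = k then (0:ℝ) else x j) := by
    intro j hj
    simp only [Finset.mem_Icc] at hj
    split_ifs with h
    · exact le_refl _
    · exact (hx j hj.1 (by omega)).1.le
  have hq1 : ∀ j ∈ Finset.Icc 1 k, (if j = k then (0:ℝ) else x j) < 1 := by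
    intro j hj
    simp only [Finset.mem_Icc] at hj
    split_ifs with h
    · exact one_pos
    · exact (hx j hj.1 (by omega)).2
  have hterm : ∀ p : ℕ, 0 < p → ∀ j ∈ Finset.Icc 1 k,
      0 < y j * (∏ l ∈ Finset.Icc 1 (j-1), x l ^ p) *
        (1 - (if j = k then (0:ℝ) else x j) ^ p) := by
    intro p hp j hj
    have hjm := Finset.mem_Icc.mp hj
    have h1 : 0 < ∏ l ∈ Finset.Icc 1 (j-1), x l ^ p := by
      rw [Finset.prod_pow]
      exact pow_pos (hP0 j hj) p
    have h2 : (if j = k then (0:ℝ) else x j) ^ p < 1 :=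
      pow_lt_one₀ (hq0 j hj) (hq1 j hj) hp.ne'
    exact mul_pos (mul_pos (hy j hjm.1 hjm.2) h1) (by linarith)
  have hS1 : 0 < ∑ j ∈ Finset.Icc 1 k, y j * (∏ l ∈ Finset.Icc 1 (j-1), x l ^ 1) *
      (1 - (if j = k then (0:ℝ) else x j) ^ 1) :=
    Finset.sum_pos (hterm 1 one_pos) hne
  have hS3 : 0 < ∑ j ∈ Finset.Icc 1 k, y j * (∏ l ∈ Finset.Icc 1 (j-1), x l ^ 3) *
      (1 - (if j = k then (0:ℝ) else x j) ^ 3) :=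
    Finset.sum_pos (hterm 3 three_pos) hne
  have hlt : ∑ j ∈ Finset.Icc 1 k, y j * (∏ l ∈ Finset.Icc 1 (j-1), x l ^ 3) *
      (1 - (if j = k then (0:ℝ) else x j) ^ 3)
      < ∑ j ∈ Finset.Icc 1 k, 3 * (y j * (∏ l ∈ Finset.Icc 1 (j-1), x l ^ 1) *
      (1 - (if j = k then (0:ℝ) else x j) ^ 1)) := by
    apply Finset.sum_lt_sum_of_nonempty hne
    intro j hj
    have hjm := Finset.mem_Icc.mp hj
    rw [Finset.prod_pow, Finset.prod_pow]
    simp only [pow_one]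
    exact coal3_key_ineq (y j) _ _ (hy j hjm.1 hjm.2) (hP0 j hj) (hP1 j hj)
      (hq0 j hj) (hq1 j hj)
  rw [← Finset.mul_sum] at hlt
  have e0 : chi3 k x y 0 = ∑ j ∈ Finset.Icc 1 k, y j * (∏ l ∈ Finset.Icc 1 (j-1), x l ^ 1) *
      (1 - (if j = k then (0:ℝ) else x j) ^ 1) := by
    simp [chi3]
  have e1 : chi3 k x y 1 = (1/3) * ∑ j ∈ Finset.Icc 1 k, y j * (∏ l ∈ Finset.Icc 1 (j-1), x l ^ 3) *
      (1 - (if j = k then (0:ℝ) else x j) ^ 3) := by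
    simp only [chi3]
    norm_num
  rw [e0, e1]
  refine ⟨hS1, by positivity, by linarith⟩

/-- Evaluation of the telescoping sum for the explicit witness. -/
lemma coal3_sumEval (p : ℕ) (hp : 0 < p) (t y1 Y : ℝ) :
    ∀ k, 2 ≤ k →
      ∑ j ∈ Finset.Icc 1 k, (if j = 1 then y1 else Y) *
          (∏ l ∈ Finset.Icc 1 (j - 1), (if l = 1 then t else (1/2:ℝ)) ^ p) *
          (1 - (if j = k then (0:ℝ) else if j = 1 then t else (1/2:ℝ)) ^ p)
        = y1 * (1 - t ^ p) + Y * t ^ p := by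
  intro k hk
  induction k, hk using Nat.le_induction with
  | base =>
    rw [show Finset.Icc 1 2 = {1, 2} by decide]
    rw [Finset.sum_insert (by decide), Finset.sum_singleton]
    norm_num [zero_pow hp.ne', Finset.Icc_self]
  | succ k hk ih =>
    set f : ℕ → ℕ → ℝ := fun m j => (if j = 1 then y1 else Y) *
          (∏ l ∈ Finset.Icc 1 (j - 1), (if l = 1 then t else (1/2:ℝ)) ^ p) *
          (1 - (if j = m then (0:ℝ) else if j = 1 then t else (1/2:ℝ)) ^ p) with hf
    have hstep : ∑ j ∈ Finset.Icc 1 (k+1), f (k+1) j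
        = ∑ j ∈ Finset.Icc 1 k, f (k+1) j + f (k+1) (k+1) :=
      Finset.sum_Icc_succ_top (by omega) _
    have hdiff : ∑ j ∈ Finset.Icc 1 k, (f (k+1) j - f k j) = f (k+1) k - f k k := by
      apply Finset.sum_eq_single_of_mem k (by simp [Finset.mem_Icc]; omega)
      intro j hj hne
      have hjm := Finset.mem_Icc.mp hj
      have h1 : j ≠ k + 1 := by omega
      simp only [hf, if_neg hne, if_neg h1, sub_self]
    rw [Finset.sum_sub_distrib] at hdiff
    have hk1 : k ≠ 1 := by omega
    have hk11 : k + 1 ≠ 1 := by omega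
    obtain ⟨m, rfl⟩ : ∃ m, k = m + 1 := ⟨k - 1, by omega⟩
    have hm1 : m + 1 + 1 - 1 = m + 1 := rfl
    have hprod : ∏ l ∈ Finset.Icc 1 (m + 1), (if l = 1 then t else (1/2:ℝ)) ^ p
        = (∏ l ∈ Finset.Icc 1 m, (if l = 1 then t else (1/2:ℝ)) ^ p) * ((1/2:ℝ)) ^ p := by
      rw [Finset.prod_Icc_succ_top (by omega)]
      congr 1
      rw [if_neg (by omega)]
    have e1 : f (m+1+1) (m+1+1) = Y * ((∏ l ∈ Finset.Icc 1 m, (if l = 1 then t else (1/2:ℝ)) ^ p) * ((1/2:ℝ)) ^ p) := by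
      simp only [hf]
      simp only [if_true]
      rw [if_neg hk11, zero_pow hp.ne', sub_zero, Nat.add_sub_cancel, hprod, mul_one]
    have e2 : f (m+1+1) (m+1) = Y * (∏ l ∈ Finset.Icc 1 m, (if l = 1 then t else (1/2:ℝ)) ^ p) * (1 - ((1/2:ℝ)) ^ p) := by
      simp only [hf]
      rw [if_neg (by omega : m + 1 ≠ m + 1 + 1), if_neg hk1, if_neg hk1, Nat.add_sub_cancel]
    have e3 : f (m+1) (m+1) = Y * (∏ l ∈ Finset.Icc 1 m, (if l = 1 then t else (1/2:ℝ)) ^ p) := by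
      simp only [hf]
      simp only [if_true]
      rw [if_neg hk1, zero_pow hp.ne', sub_zero, Nat.add_sub_cancel, mul_one]
    rw [hstep, e1]
    rw [ih] at hdiff
    rw [e2, e3] at hdiff
    linarith [hdiff]

/-- A suitable parameter `t` exists for each admissible `(a, b)`. -/
lemma coal3_exists_t (a b : ℝ) (h0 : 0 < a) (h1 : 0 < b) (h10 : b < a) :
    ∃ t : ℝ, 0 < t ∧ t < 1 ∧ a * t ^ 2 < 3 * b ∧ 3 * b < a * (1 + t + t ^ 2) := by
  rcases le_total (3 * b) a with h | h
  · have hd : 0 < 3 * b + a := by linarith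
    refine ⟨3 * b / (3 * b + a), div_pos (by linarith) hd, ?_, ?_, ?_⟩
    · rw [div_lt_one hd]; linarith
    · rw [div_pow, show a * ((3*b)^2/(3*b+a)^2) = a * (3*b)^2 / (3*b+a)^2 by ring,
        div_lt_iff₀ (by positivity)]
      nlinarith [mul_pos (mul_pos h1 h1) h1, mul_pos (mul_pos h0 h1) h1,
        mul_pos (mul_pos h0 h0) h1]
    · have ht : 0 < 3 * b / (3 * b + a) := div_pos (by linarith) hd
      nlinarith [sq_nonneg (3 * b / (3 * b + a)), mul_pos h0 ht]
  · have ha2 : (0:ℝ) < 2 * a := by linarith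
    refine ⟨(a + b) / (2 * a), div_pos (by linarith) ha2, ?_, ?_, ?_⟩
    · rw [div_lt_one ha2]; linarith
    · rw [div_pow, show a * ((a+b)^2/(2*a)^2) = a * (a+b)^2 / (2*a)^2 by ring,
        div_lt_iff₀ (by positivity)]
      nlinarith [mul_nonneg (mul_nonneg h0.le h0.le) (by linarith : (0:ℝ) ≤ 3*b - a),
        mul_pos (mul_pos h0 h1) (sub_pos.mpr h10), mul_pos (mul_pos h0 h0) h1]
    · rw [div_pow, show a * (1 + (a+b)/(2*a) + (a+b)^2/(2*a)^2)
          = (a*((2*a)^2 + (a+b)*(2*a) + (a+b)^2))/(2*a)^2 by field_simp,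
        lt_div_iff₀ (by positivity)]
      nlinarith [mul_pos (show (0:ℝ) < 7*a - b by linarith) (show (0:ℝ) < a - b by linarith)]

/-- Backward direction: every admissible point lies in `Coal3 k`. -/
lemma coal3_backward (k : ℕ) (hk : 2 ≤ k) (c : Fin 2 → ℝ)
    (h0 : 0 < c 0) (h1 : 0 < c 1) (h10 : c 1 < c 0) : c ∈ Coal3 k := by
  obtain ⟨t, ht0, ht1, hlt, hgt⟩ := coal3_exists_t (c 0) (c 1) h0 h1 h10
  set a := c 0
  set b := c 1
  set y1 : ℝ := (3 * b - a * t ^ 2) / ((1 - t) * (1 + t)) with hy1def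
  set Y : ℝ := (a * (1 + t + t ^ 2) - 3 * b) / (t * (1 + t)) with hYdef
  have hy1 : 0 < y1 := div_pos (by linarith) (by nlinarith)
  have hY : 0 < Y := div_pos (by linarith) (by nlinarith)
  have htne : (1:ℝ) - t ≠ 0 := by linarith
  have htne' : (1:ℝ) + t ≠ 0 := by linarith
  have htne'' : t ≠ 0 := ht0.ne'
  refine ⟨fun l => if l = 1 then t else 1/2, fun j => if j = 1 then y1 else Y, ?_, ?_, ?_⟩
  · intro j _ _
    dsimp only
    split_ifs
    · exact ⟨ht0, ht1⟩
    · norm_num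
  · intro j _ _
    dsimp only
    split_ifs
    · exact hy1
    · exact hY
  · funext i
    fin_cases i
    · show a = chi3 k _ _ 0
      simp only [chi3, Fin.val_zero, show (0+2).choose 2 = 1 from rfl]
      rw [coal3_sumEval 1 one_pos t y1 Y k hk]
      rw [hy1def, hYdef]
      field_simp
      ring
    · show b = chi3 k _ _ 1
      simp only [chi3, Fin.val_one, show (1+2).choose 2 = 3 from rfl]
      rw [coal3_sumEval 3 three_pos t y1 Y k hk]
      rw [hy1def, hYdef]
      field_simp
      ring

lemma coal3_eq_target (k : ℕ) (hk : 2 ≤ k) :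
    Coal3 k = { c : Fin 2 → ℝ | 0 < c 0 ∧ 0 < c 1 ∧ c 1 < c 0 } := by
  ext c
  constructor
  · rintro ⟨x, y, hx, hy, rfl⟩
    exact coal3_forward k hk x y hx hy
  · rintro ⟨h0, h1, h10⟩
    exact coal3_backward k hk c h0 h1 h10

/-- For every `k ≥ 2`, the coalescence manifold for sample size 3 is
`C_{3,k} = {(a,b) : a > 0 and 0 < b < a}`; in particular `C_{3,k} = C_{3,2}` for all
`k ≥ 2`. -/
theorem coal_three (k : ℕ) (hk : 2 ≤ k) :
    Coal3 k = { c : Fin 2 → ℝ | 0 < c 0 ∧ 0 < c 1 ∧ c 1 < c 0 } ∧ Coal3 k = Coal3 2 := by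
  refine ⟨coal3_eq_target k hk, ?_⟩
  rw [coal3_eq_target k hk, coal3_eq_target 2 le_rfl]
end

section
/- For every integer n ≥ 2 and every integer k with 1 ≤ k < ⌈n/2⌉, the coalescence manifold C_{n,k} is a proper subset of C_{n,k+1}, i.e., C_{n,k} ⊆ C_{n,k+1} and C_{n,k} ≠ C_{n,k+1}. -/
open Finset

/-- The map `χ_{n,k}`: given breakpoint parameters `x` (used at indices `1, …, k-1`, with the
convention `x_k = 0`) and population sizes `y` (used at indices `1, …, k`), its coordinate
indexed by `i : Fin (n-1)` (corresponding to `m = i + 2`, `m = 2, …, n`) is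
`c_m = (1/C(m,2)) ∑_{j=1}^k y_j (∏_{l=1}^{j-1} x_l^{C(m,2)}) (1 - x_j^{C(m,2)})`. -/
noncomputable def chi (n k : ℕ) (x y : ℕ → ℝ) : Fin (n - 1) → ℝ :=
  fun i =>
    (1 / ((i.val + 2).choose 2 : ℝ)) *
      ∑ j ∈ Finset.Icc 1 k,
        y j * (∏ l ∈ Finset.Icc 1 (j - 1), x l ^ (i.val + 2).choose 2) *
          (1 - (if j = k then (0 : ℝ) else x j) ^ (i.val + 2).choose 2)

/-- The coalescence manifold `C_{n,k} ⊆ ℝ^{n-1}`: the image of `χ_{n,k}` over parameters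
`x ∈ (0,1)^{k-1}`, `y ∈ (0,∞)^k`. -/
def Coal (n k : ℕ) : Set (Fin (n - 1) → ℝ) :=
  { c | ∃ x y : ℕ → ℝ,
      (∀ j, 1 ≤ j → j ≤ k - 1 → 0 < x j ∧ x j < 1) ∧
      (∀ j, 1 ≤ j → j ≤ k → 0 < y j) ∧
      c = chi n k x y }

private lemma rolle_finset (g g' : ℝ → ℝ) (hgd : ∀ x, HasDerivAt g (g' x) x)
    (S : Finset ℝ) (hS : ∀ s ∈ S, g s = 0) :
    ∃ S' : Finset ℝ, S.card - 1 ≤ S'.card ∧ ∀ t ∈ S', g' t = 0 := by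
  classical
  rcases S.eq_empty_or_nonempty with rfl | hne
  · exact ⟨∅, by simp, by simp⟩
  have gcont : Continuous g := by
    rw [continuous_iff_continuousAt]; exact fun x => (hgd x).continuousAt
  set m := S.max' hne with hm
  set nxt : ℝ → ℝ := fun r => if h : (S.filter (fun z => r < z)).Nonempty
      then (S.filter (fun z => r < z)).min' h else 0 with hnxtdef
  have hfil : ∀ r ∈ S.erase m, (S.filter (fun z => r < z)).Nonempty := by
    intro r hr
    have hrS := mem_of_mem_erase hr
    have hrm : r < m := lt_of_le_of_ne (S.le_max' r hrS) (ne_of_mem_erase hr)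
    exact ⟨m, mem_filter.2 ⟨S.max'_mem hne, hrm⟩⟩
  have hnxt : ∀ r ∈ S.erase m, nxt r ∈ S ∧ r < nxt r := by
    intro r hr
    have h1 : nxt r = (S.filter (fun z => r < z)).min' (hfil r hr) := dif_pos (hfil r hr)
    have h2 := (S.filter (fun z => r < z)).min'_mem (hfil r hr)
    rw [← h1, mem_filter] at h2
    exact h2
  have hnxtle : ∀ r ∈ S.erase m, ∀ z ∈ S, r < z → nxt r ≤ z := by
    intro r hr z hz hrz
    have h1 : nxt r = (S.filter (fun w => r < w)).min' (hfil r hr) := dif_pos (hfil r hr)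
    rw [h1]
    exact min'_le _ _ (mem_filter.2 ⟨hz, hrz⟩)
  have key : ∀ r ∈ S.erase m, ∃ c, r < c ∧ c < nxt r ∧ g' c = 0 := by
    intro r hr
    obtain ⟨hnS, hrlt⟩ := hnxt r hr
    obtain ⟨c, hc, hc0⟩ := exists_hasDerivAt_eq_zero hrlt gcont.continuousOn
      (by rw [hS r (mem_of_mem_erase hr), hS _ hnS]) (fun x _ => hgd x)
    exact ⟨c, hc.1, hc.2, hc0⟩
  set pk : ℝ → ℝ := fun r => if h : ∃ c, r < c ∧ c < nxt r ∧ g' c = 0 then h.choose else 0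
    with hpkdef
  have pkp : ∀ r ∈ S.erase m, r < pk r ∧ pk r < nxt r ∧ g' (pk r) = 0 := by
    intro r hr
    have h := key r hr
    simp only [hpkdef, dif_pos h]
    exact h.choose_spec
  have mono : ∀ a ∈ S.erase m, ∀ b ∈ S.erase m, a < b → pk a < pk b := by
    intro a ha b hb hab
    calc pk a < nxt a := (pkp a ha).2.1
      _ ≤ b := hnxtle a ha b (mem_of_mem_erase hb) hab
      _ < pk b := (pkp b hb).1
  refine ⟨(S.erase m).image pk, ?_, ?_⟩
  · rw [Finset.card_image_of_injOn, card_erase_of_mem (S.max'_mem hne)]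
    intro a ha b hb hab
    by_contra hne'
    rcases lt_or_gt_of_ne hne' with h | h
    · exact absurd hab (ne_of_lt (mono a ha b hb h))
    · exact absurd hab.symm (ne_of_lt (mono b hb a ha h))
  · intro t ht
    obtain ⟨r, hr, rfl⟩ := mem_image.1 ht
    exact (pkp r hr).2.2

private lemma vanish : ∀ (N : ℕ) (B : Finset ℝ) (co : ℝ → ℝ) (S : Finset ℝ),
    B.card = N → (∀ r ∈ B, 0 < r) → N ≤ S.card →
    (∀ s ∈ S, ∑ r ∈ B, co r * r ^ s = 0) → ∀ r ∈ B, co r = 0 := by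
  intro N
  induction N with
  | zero =>
    intro B co S hB _ _ _ r hr
    rw [Finset.card_eq_zero] at hB
    simp [hB] at hr
  | succ N ih =>
    intro B co S hB hpos hcard hsum r₀ hr₀
    have hne : B.Nonempty := by rw [← Finset.card_pos, hB]; omega
    set R := B.max' hne with hR
    have hRmem : R ∈ B := B.max'_mem hne
    have hRpos : 0 < R := hpos R hRmem
    have hderiv : ∀ u : ℝ, HasDerivAt (fun u : ℝ => ∑ r ∈ B, co r * (r / R) ^ u)
        (∑ r ∈ B, co r * ((r / R) ^ u * Real.log (r / R))) u := by
      intro u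
      apply HasDerivAt.fun_sum
      intro i hi
      exact ((Real.hasStrictDerivAt_const_rpow (div_pos (hpos i hi) hRpos) u).hasDerivAt).const_mul _
    have hgS : ∀ s ∈ S, (∑ r ∈ B, co r * (r / R) ^ s) = 0 := by
      intro s hs
      have h1 : ∑ r ∈ B, co r * (r / R) ^ s = ∑ r ∈ B, (co r * r ^ s) / R ^ s :=
        Finset.sum_congr rfl fun r hr => by
          rw [Real.div_rpow (hpos r hr).le hRpos.le]; ring
      rw [h1, ← Finset.sum_div, hsum s hs, zero_div]
    obtain ⟨S', hS'card, hS'⟩ := rolle_finset _ _ hderiv S hgS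
    -- zero coefficients away from R
    have hzero : ∀ z ∈ B.erase R, co z = 0 := by
      have hBR : ((B.erase R).image (fun z => z / R)).card = N := by
        have hinj : Set.InjOn (fun z => z / R) (B.erase R) := by
          intro a _ b _ hab
          field_simp at hab
          exact hab
        rw [Finset.card_image_of_injOn hinj, card_erase_of_mem hRmem, hB]
        omega
      have harg1 : ∀ t ∈ (B.erase R).image (fun z => z / R), 0 < t := by
        intro t ht
        obtain ⟨z, hz, rfl⟩ := mem_image.1 ht
        exact div_pos (hpos z (mem_of_mem_erase hz)) hRpos
      have harg2 : N ≤ S'.card := by omega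
      have harg3 : ∀ s ∈ S', ∑ t ∈ (B.erase R).image (fun z => z / R),
          (co (t * R) * Real.log t) * t ^ s = 0 := by
        intro s hs
        have h1 : ∑ t ∈ (B.erase R).image (fun z => z / R),
            (co (t * R) * Real.log t) * t ^ s
            = ∑ z ∈ B.erase R, (co (z / R * R) * Real.log (z / R)) * (z / R) ^ s := by
          apply Finset.sum_image
          intro a _ b _ hab
          field_simp at hab
          exact hab
        rw [h1]
        have h2 : ∑ z ∈ B.erase R, (co (z / R * R) * Real.log (z / R)) * (z / R) ^ s
            = ∑ z ∈ B, co z * ((z / R) ^ s * Real.log (z / R)) := by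
          rw [Finset.sum_erase]
          · apply Finset.sum_congr rfl
            intro z _
            rw [div_mul_cancel₀ _ hRpos.ne']
            ring
          · rw [div_self hRpos.ne', Real.log_one]
            ring
        rw [h2]
        exact hS' s hs
      have hiapp := ih ((B.erase R).image (fun z => z / R))
        (fun t => co (t * R) * Real.log t) S' hBR harg1 harg2 harg3
      intro z hz
      have hmem : z / R ∈ (B.erase R).image (fun z => z / R) :=
        mem_image_of_mem _ hz
      have h3 : co (z / R * R) * Real.log (z / R) = 0 := hiapp _ hmem
      rw [div_mul_cancel₀ _ hRpos.ne'] at h3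
      have hzR : z < R := lt_of_le_of_ne (B.le_max' z (mem_of_mem_erase hz))
        (ne_of_mem_erase hz)
      have hlog : Real.log (z / R) < 0 :=
        Real.log_neg (div_pos (hpos z (mem_of_mem_erase hz)) hRpos)
          ((div_lt_one hRpos).2 hzR)
      rcases mul_eq_zero.1 h3 with h | h
      · exact h
      · exact absurd h hlog.ne
    -- co R = 0
    have hcoR : co R = 0 := by
      have hSne : S.Nonempty := by rw [← Finset.card_pos]; omega
      obtain ⟨s, hs⟩ := hSne
      have h1 := hsum s hs
      rw [Finset.sum_eq_single_of_mem R hRmem (fun z hz hzR => by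
        rw [hzero z (mem_erase.2 ⟨hzR, hz⟩)]; ring)] at h1
      have := Real.rpow_pos_of_pos hRpos s
      rcases mul_eq_zero.1 h1 with h | h
      · exact h
      · exact absurd h this.ne'
    rcases eq_or_ne r₀ R with rfl | hne'
    · exact hcoR
    · exact hzero r₀ (mem_erase.2 ⟨hne', hr₀⟩)

private lemma vanish' {ι : Type*} [DecidableEq ι] (t : Finset ι) (b : ι → ℝ) (co : ι → ℝ)
    (S : Finset ℝ) (hpos : ∀ i ∈ t, 0 < b i) (hcard : t.card ≤ S.card)
    (hsum : ∀ s ∈ S, ∑ i ∈ t, co i * b i ^ s = 0) :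
    ∀ r : ℝ, ∑ i ∈ t.filter (fun i => b i = r), co i = 0 := by
  classical
  intro r
  by_cases hr : r ∈ t.image b
  · refine vanish (t.image b).card (t.image b)
      (fun r => ∑ i ∈ t.filter (fun i => b i = r), co i) S rfl ?_
      (le_trans (card_image_le) hcard) ?_ r hr
    · intro r' hr'
      obtain ⟨i, hi, rfl⟩ := mem_image.1 hr'
      exact hpos i hi
    · intro s hs
      rw [← hsum s hs]
      apply Finset.sum_image'
      intro c hc
      rw [Finset.sum_mul]
      apply Finset.sum_congr rfl
      intro j hj
      rw [(mem_filter.1 hj).2]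
  · have hempty : t.filter (fun i => b i = r) = ∅ := by
      rw [Finset.filter_eq_empty_iff]
      intro i hi hbi
      exact hr (hbi ▸ mem_image_of_mem b hi)
    rw [hempty, Finset.sum_empty]

private lemma telescope' (yy a : ℕ → ℝ) (ha : a 0 = 1) :
    ∀ K : ℕ, ∑ j ∈ Icc 1 (K + 1), yy j * (a (j - 1) - (if j = K + 1 then 0 else a j))
      = yy 1 + ∑ j ∈ Icc 1 K, (yy (j + 1) - yy j) * a j := by
  intro K
  induction K with
  | zero => simp [ha]
  | succ K IH =>
    rw [sum_Icc_succ_top (by omega : 1 ≤ K + 1 + 1)]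
    have h1 : ∑ j ∈ Icc 1 (K + 1), yy j * (a (j - 1) - (if j = K + 1 + 1 then 0 else a j))
        = ∑ j ∈ Icc 1 (K + 1), yy j * (a (j - 1) - (if j = K + 1 then 0 else a j))
          + ∑ j ∈ Icc 1 (K + 1), yy j * ((if j = K + 1 then 0 else a j) - a j) := by
      rw [← Finset.sum_add_distrib]
      apply Finset.sum_congr rfl
      intro j hj
      have hj' := mem_Icc.1 hj
      rw [if_neg (by omega : ¬ j = K + 1 + 1)]
      ring
    have h2 : ∑ j ∈ Icc 1 (K + 1), yy j * ((if j = K + 1 then 0 else a j) - a j)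
        = - (yy (K + 1) * a (K + 1)) := by
      rw [Finset.sum_eq_single_of_mem (K + 1) (mem_Icc.2 ⟨by omega, le_rfl⟩)]
      · rw [if_pos rfl]; ring
      · intro j _ hne
        rw [if_neg hne]; ring
    rw [h1, h2, IH, sum_Icc_succ_top (by omega : 1 ≤ K + 1)]
    have : (K + 1 + 1 : ℕ) - 1 = K + 1 := by omega
    rw [this, if_pos rfl]
    ring

private lemma key_form (s : ℕ) (hs : s ≠ 0) (x y : ℕ → ℝ) (K : ℕ) (hK : 1 ≤ K) :
    ∑ j ∈ Icc 1 K, y j * (∏ l ∈ Icc 1 (j - 1), x l ^ s) * (1 - (if j = K then (0:ℝ) else x j) ^ s)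
      = y 1 + ∑ j ∈ Icc 1 (K - 1), (y (j + 1) - y j) * (∏ l ∈ Icc 1 j, x l) ^ s := by
  obtain ⟨K, rfl⟩ : ∃ K', K = K' + 1 := ⟨K - 1, by omega⟩
  have hsub : (K + 1 : ℕ) - 1 = K := by omega
  rw [hsub, ← telescope' y (fun j => (∏ l ∈ Icc 1 j, x l) ^ s) (by simp) K]
  apply Finset.sum_congr rfl
  intro j hj
  have hj' := mem_Icc.1 hj
  have hprod : ∏ l ∈ Icc 1 (j - 1), x l ^ s = (∏ l ∈ Icc 1 (j - 1), x l) ^ s :=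
    Finset.prod_pow _ _ _
  have hstep : ∏ l ∈ Icc 1 j, x l = (∏ l ∈ Icc 1 (j - 1), x l) * x j := by
    have hins : Icc 1 j = insert j (Icc 1 (j - 1)) := by
      ext z; simp only [mem_Icc, mem_insert]; omega
    rw [hins, Finset.prod_insert (by simp only [mem_Icc]; omega)]
    ring
  by_cases hjK : j = K + 1
  · rw [if_pos hjK, if_pos hjK, zero_pow hs, hprod]
    ring
  · rw [if_neg hjK, if_neg hjK, hprod]
    simp only [hstep, mul_pow]
    ring

private lemma half_pow_inj {a b : ℕ} (h : ((1:ℝ)/2) ^ a = ((1:ℝ)/2) ^ b) : a = b := by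
  by_contra hne
  rcases Nat.lt_or_ge a b with hlt | hge
  · have h2 := pow_lt_pow_right_of_lt_one₀ (by norm_num : (0:ℝ) < 1/2)
      (by norm_num : (1:ℝ)/2 < 1) hlt
    linarith
  · have hlt : b < a := by omega
    have h2 := pow_lt_pow_right_of_lt_one₀ (by norm_num : (0:ℝ) < 1/2)
      (by norm_num : (1:ℝ)/2 < 1) hlt
    linarith

private lemma choose_two_lt {a b : ℕ} (ha : 1 ≤ a) (hab : a < b) :
    a.choose 2 < b.choose 2 := by
  induction b with
  | zero => omega
  | succ b IH =>
    rcases Nat.lt_or_ge a b with h | h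
    · calc a.choose 2 < b.choose 2 := IH h
        _ ≤ (b + 1).choose 2 := Nat.choose_le_choose 2 (by omega)
    · have hb : a = b := by omega
      subst hb
      simp [Nat.choose_succ_succ, Nat.choose_one_right]
      omega


/-- For every `n ≥ 2` and every `k` with `1 ≤ k < ⌈n/2⌉`
(note `⌈n/2⌉ = (n+1)/2` in natural-number division), the coalescence manifold `C_{n,k}`
is a proper subset of `C_{n,k+1}`. -/
theorem coal_strict_mono (n k : ℕ) (hn : 2 ≤ n) (hk : 1 ≤ k) (hk' : k < (n + 1) / 2) :
    Coal n k ⊆ Coal n (k + 1) ∧ Coal n k ≠ Coal n (k + 1) := by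
  classical
  constructor
  · rintro c ⟨x, y, hx, hy, rfl⟩
    refine ⟨fun j => if j = k then (1:ℝ)/2 else x j,
            fun j => if j = k + 1 then y k else y j, ?_, ?_, ?_⟩
    · intro j hj1 hj2
      dsimp only
      by_cases h : j = k
      · rw [if_pos h]; norm_num
      · rw [if_neg h]
        exact hx j hj1 (by omega)
    · intro j hj1 hj2
      dsimp only
      by_cases h : j = k + 1
      · rw [if_pos h]; exact hy k hk le_rfl
      · rw [if_neg h]; exact hy j hj1 (by omega)
    · funext i
      have hs : ((i : ℕ) + 2).choose 2 ≠ 0 := (Nat.choose_pos (by omega)).ne'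
      simp only [chi]
      congr 1
      rw [key_form _ hs x y k hk, key_form _ hs _ _ (k + 1) (by omega)]
      simp only [Nat.add_sub_cancel]
      have h1 : (if 1 = k + 1 then y k else y 1) = y 1 := if_neg (by omega)
      rw [h1]
      have hins : Icc 1 k = insert k (Icc 1 (k - 1)) := by
        ext z; simp only [mem_Icc, mem_insert]; omega
      rw [hins, Finset.sum_insert (by simp only [mem_Icc]; omega)]
      rw [if_pos rfl, if_neg (by omega : ¬ k = k + 1)]
      have hcong : ∀ j ∈ Icc 1 (k - 1),
          ((if j + 1 = k + 1 then y k else y (j + 1)) - (if j = k + 1 then y k else y j)) *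
            (∏ l ∈ Icc 1 j, (if l = k then (1:ℝ)/2 else x l)) ^ ((i : ℕ) + 2).choose 2
          = (y (j + 1) - y j) * (∏ l ∈ Icc 1 j, x l) ^ ((i : ℕ) + 2).choose 2 := by
        intro j hj
        have hj' := mem_Icc.1 hj
        rw [if_neg (by omega : ¬ j + 1 = k + 1), if_neg (by omega : ¬ j = k + 1)]
        congr 2
        apply Finset.prod_congr rfl
        intro l hl
        have hl' := mem_Icc.1 hl
        rw [if_neg (by omega : ¬ l = k)]
      rw [Finset.sum_congr rfl hcong]
      ring
  · intro heqset
    set wx : ℕ → ℝ := fun _ => (1:ℝ)/2 with hwx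
    set wy : ℕ → ℝ := fun j => (j : ℝ) with hwy
    have hcmem : chi n (k + 1) wx wy ∈ Coal n (k + 1) := by
      refine ⟨wx, wy, ?_, ?_, rfl⟩
      · intro j _ _; constructor <;> norm_num [hwx]
      · intro j hj1 _
        simp only [hwy]
        exact_mod_cast Nat.pos_of_ne_zero (by omega)
    rw [← heqset] at hcmem
    obtain ⟨x', y', hx', hy', hceq⟩ := hcmem
    set Q : ℕ → ℝ := fun j => ∏ l ∈ Icc 1 j, x' l with hQ
    have h2k : 2 * k ≤ n - 1 := by omega
    have star : ∀ m ∈ Icc 2 n, (1:ℝ) + ∑ j ∈ Icc 1 k, (((1:ℝ)/2) ^ j) ^ m.choose 2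
        = y' 1 + ∑ j ∈ Icc 1 (k - 1), (y' (j + 1) - y' j) * Q j ^ m.choose 2 := by
      intro m hm
      have hm' := mem_Icc.1 hm
      have hi : m - 2 < n - 1 := by omega
      have h1 := congrFun hceq ⟨m - 2, hi⟩
      simp only [chi] at h1
      have hm2 : (m - 2) + 2 = m := by omega
      rw [hm2] at h1
      have hch : m.choose 2 ≠ 0 := (Nat.choose_pos (by omega)).ne'
      have hcast : ((m.choose 2 : ℕ) : ℝ) ≠ 0 := Nat.cast_ne_zero.2 hch
      have h2 := mul_left_cancel₀ (one_div_ne_zero hcast) h1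
      rw [key_form _ hch wx wy (k + 1) (by omega), key_form _ hch x' y' k hk] at h2
      simp only [Nat.add_sub_cancel] at h2
      have h3 : wy 1 = 1 := by simp [hwy]
      have h4 : ∀ j ∈ Icc 1 k, (wy (j + 1) - wy j) * (∏ l ∈ Icc 1 j, wx l) ^ m.choose 2
          = (((1:ℝ)/2) ^ j) ^ m.choose 2 := by
        intro j hj
        simp only [hwx, hwy]
        rw [Finset.prod_const, Nat.card_Icc]
        have : j + 1 - 1 = j := by omega
        rw [this]
        push_cast
        ring
      rw [h3, Finset.sum_congr rfl h4] at h2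
      exact h2
    have hvan := vanish' ((Icc 0 k).disjSum (Icc 1 (k - 1)))
      (Sum.elim (fun j => ((1:ℝ)/2) ^ j) Q)
      (Sum.elim (fun j => if j = 0 then 1 - y' 1 else 1) (fun j => -(y' (j + 1) - y' j)))
      ((Icc 2 n).image (fun m => ((m.choose 2 : ℕ) : ℝ))) ?_ ?_ ?_
    · -- use hvan to build injection
      have hexists : ∀ j ∈ Icc 1 k, ∃ j', j' ∈ Icc 1 (k - 1) ∧ Q j' = ((1:ℝ)/2) ^ j := by
        intro j hj
        have hj' := mem_Icc.1 hj
        by_contra hno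
        push_neg at hno
        have h0 := hvan (((1:ℝ)/2) ^ j)
        have hfil : ((Icc 0 k).disjSum (Icc 1 (k - 1))).filter
            (fun i => Sum.elim (fun j => ((1:ℝ)/2) ^ j) Q i = ((1:ℝ)/2) ^ j)
            = {Sum.inl j} := by
          ext i
          cases i with
          | inl a =>
            simp only [mem_filter, inl_mem_disjSum, mem_Icc, Sum.elim_inl, mem_singleton,
              Sum.inl.injEq]
            constructor
            · rintro ⟨-, heq⟩
              exact half_pow_inj heq
            · rintro rfl
              exact ⟨⟨Nat.zero_le _, hj'.2⟩, rfl⟩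
          | inr a =>
            simp only [mem_filter, inr_mem_disjSum, Sum.elim_inr, mem_singleton]
            constructor
            · rintro ⟨ha, heq⟩
              exact absurd heq (hno a ha)
            · rintro h
              exact absurd h (by simp)
        rw [hfil, Finset.sum_singleton] at h0
        simp only [Sum.elim_inl] at h0
        rw [if_neg (by omega : ¬ j = 0)] at h0
        norm_num at h0
      set f : ℕ → ℕ := fun j =>
        if h : ∃ j', j' ∈ Icc 1 (k - 1) ∧ Q j' = ((1:ℝ)/2) ^ j then h.choose else 0 with hf
      have hfprop : ∀ j ∈ Icc 1 k, f j ∈ Icc 1 (k - 1) ∧ Q (f j) = ((1:ℝ)/2) ^ j := by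
        intro j hj
        have h := hexists j hj
        simp only [hf, dif_pos h]
        exact h.choose_spec
      have hcardlt : (Icc 1 (k - 1)).card < (Icc 1 k).card := by
        rw [Nat.card_Icc, Nat.card_Icc]; omega
      obtain ⟨j₁, hj₁, j₂, hj₂, hne12, hfeq⟩ :=
        Finset.exists_ne_map_eq_of_card_lt_of_maps_to hcardlt (fun j hj => (hfprop j hj).1)
      apply hne12
      have e1 := (hfprop j₁ hj₁).2
      have e2 := (hfprop j₂ hj₂).2
      rw [hfeq] at e1
      exact (half_pow_inj (e2.symm.trans e1)).symm
    · -- positivity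
      intro i hi
      cases i with
      | inl j => simp only [Sum.elim_inl]; positivity
      | inr j =>
        rw [inr_mem_disjSum] at hi
        have hj' := mem_Icc.1 hi
        simp only [Sum.elim_inr, hQ]
        apply Finset.prod_pos
        intro l hl
        have hl' := mem_Icc.1 hl
        exact (hx' l hl'.1 (by omega)).1
    · -- cardinality
      have hScard : ((Icc 2 n).image (fun m => ((m.choose 2 : ℕ) : ℝ))).card = n - 1 := by
        rw [Finset.card_image_of_injOn, Nat.card_Icc]
        · omega
        · intro a ha b hb hab
          have ha' := mem_Icc.1 ha
          have hb' := mem_Icc.1 hb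
          dsimp only at hab
          have h1 : a.choose 2 = b.choose 2 := by exact_mod_cast hab
          by_contra hne2
          rcases Nat.lt_or_ge a b with h | h
          · exact absurd h1 (choose_two_lt (by omega) h).ne
          · exact absurd h1.symm (choose_two_lt (by omega) (by omega : b < a)).ne
      rw [card_disjSum, Nat.card_Icc, Nat.card_Icc, hScard]
      omega
    · -- main sum hypothesis
      intro s hs
      obtain ⟨m, hm, rfl⟩ := mem_image.1 hs
      have hmm := mem_Icc.1 hm
      have hrw : ∀ i ∈ (Icc 0 k).disjSum (Icc 1 (k - 1)),
          (Sum.elim (fun j => if j = 0 then 1 - y' 1 else 1) (fun j => -(y' (j + 1) - y' j))) i *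
            (Sum.elim (fun j => ((1:ℝ)/2) ^ j) Q) i ^ ((m.choose 2 : ℕ) : ℝ)
          = (Sum.elim (fun j => if j = 0 then 1 - y' 1 else 1) (fun j => -(y' (j + 1) - y' j))) i *
            (Sum.elim (fun j => ((1:ℝ)/2) ^ j) Q) i ^ (m.choose 2 : ℕ) := by
        intro i _
        rw [Real.rpow_natCast]
      rw [Finset.sum_congr rfl hrw, Finset.sum_disjSum]
      simp only [Sum.elim_inl, Sum.elim_inr]
      have hins0 : Icc 0 k = insert 0 (Icc 1 k) := by
        ext z; simp only [mem_Icc, mem_insert]; omega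
      rw [hins0, Finset.sum_insert (by simp only [mem_Icc]; omega)]
      rw [if_pos rfl]
      have hsimp : ∀ j ∈ Icc 1 k,
          (if j = 0 then 1 - y' 1 else 1) * (((1:ℝ)/2) ^ j) ^ m.choose 2
          = (((1:ℝ)/2) ^ j) ^ m.choose 2 := by
        intro j hj
        have hj' := mem_Icc.1 hj
        rw [if_neg (by omega : ¬ j = 0), one_mul]
      rw [Finset.sum_congr rfl hsimp]
      have hstar := star m hm
      have hneg : ∑ j ∈ Icc 1 (k - 1), -(y' (j + 1) - y' j) * Q j ^ m.choose 2
          = -∑ j ∈ Icc 1 (k - 1), (y' (j + 1) - y' j) * Q j ^ m.choose 2 := by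
        rw [← Finset.sum_neg_distrib]
        apply Finset.sum_congr rfl
        intro j _
        ring
      rw [hneg]
      have hzero : (((1:ℝ)/2) ^ 0) ^ m.choose 2 = 1 := by norm_num
      rw [hzero]
      linarith
end

section
/- For every integer n ≥ 3 and every integer k ≥ ⌈n/2⌉, the normalized coalescence manifold Ĉ_{n,k} has nonempty interior relative to the affine hyperplane H = { v ∈ ℝ^{n−1} : v₂ + ⋯ + v_n = 1 }, i.e., there is a point of Ĉ_{n,k} together with an open neighborhood of it in H contained in Ĉ_{n,k}. -/
open Finset

/-- The normalized coalescence manifold `Ĉ_{n,k} = {c/(c₂ + ⋯ + c_n) : c ∈ C_{n,k}}`. -/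
def CoalHat (n k : ℕ) : Set (Fin (n - 1) → ℝ) :=
  { v | ∃ c ∈ Coal n k, v = (∑ i, c i)⁻¹ • c }

section AuxPoly
open Polynomial


lemma card_filter_eq_sum_count (s : Multiset ℝ) (pr : ℝ → Prop) [DecidablePred pr] :
    (s.filter pr).card = ∑ x ∈ s.toFinset.filter pr, s.count x := by
  rw [← Multiset.toFinset_sum_count_eq (s.filter pr), Multiset.toFinset_filter]
  exact Finset.sum_congr rfl fun x hx => by
    rw [Multiset.count_filter_of_pos (Finset.mem_filter.mp hx).2]

lemma posRoots_card_le_derivative (p : ℝ[X]) (hp' : derivative p ≠ 0) :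
    (p.roots.filter (fun x => (0:ℝ) < x)).card ≤
      ((derivative p).roots.filter (fun x => (0:ℝ) < x)).card + 1 := by
  have hp : p ≠ 0 := by rintro rfl; simp at hp'
  set A := p.roots.toFinset.filter (fun x => (0:ℝ) < x) with hA
  set B := (derivative p).roots.toFinset.filter (fun x => (0:ℝ) < x) with hB
  have interleave : A.card ≤ (B \ A).card + 1 := by
    refine Finset.card_le_diff_of_interleaved fun x hx y hy hxy hxy' => ?_
    rw [hA, Finset.mem_filter, Multiset.mem_toFinset, mem_roots hp] at hx hy
    obtain ⟨z, hz1, hz2⟩ := exists_deriv_eq_zero hxy p.continuousOn (hx.1.trans hy.1.symm)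
    refine ⟨z, ?_, hz1.1, hz1.2⟩
    rw [hB, Finset.mem_filter, Multiset.mem_toFinset, mem_roots hp']
    exact ⟨by rwa [IsRoot, ← p.deriv], lt_trans hx.2 hz1.1⟩
  have hcount : ∀ x ∈ A, p.roots.count x = (derivative p).roots.count x + 1 := by
    intro x hx
    rw [hA, Finset.mem_filter, Multiset.mem_toFinset] at hx
    have hroot : p.IsRoot x := (mem_roots hp).mp hx.1
    rw [count_roots, count_roots, derivative_rootMultiplicity_of_root hroot]
    have : 1 ≤ p.rootMultiplicity x := (rootMultiplicity_pos hp).mpr hroot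
    omega
  calc (p.roots.filter (fun x => (0:ℝ) < x)).card
      = ∑ x ∈ A, p.roots.count x := card_filter_eq_sum_count _ _
    _ = ∑ x ∈ A, (derivative p).roots.count x + A.card := by
        rw [Finset.sum_congr rfl hcount, Finset.sum_add_distrib]; simp
    _ ≤ ∑ x ∈ A, (derivative p).roots.count x + ((B \ A).card + 1) :=
        Nat.add_le_add_left interleave _
    _ ≤ ∑ x ∈ A ∩ B, (derivative p).roots.count x
          + (∑ x ∈ B \ A, (derivative p).roots.count x + 1) := by
        gcongr ?_ + (?_ + 1)
        · refine le_of_eq (Finset.sum_subset_zero_on_sdiff Finset.inter_subset_left ?_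
            (fun _ _ => rfl)).symm
          intro x hx
          rw [Finset.mem_sdiff, Finset.mem_inter, not_and] at hx
          have hxB : x ∉ B := hx.2 hx.1
          rw [Multiset.count_eq_zero]
          intro hmem
          exact hxB (by
            rw [hB, Finset.mem_filter, Multiset.mem_toFinset]
            rw [hA, Finset.mem_filter] at hx
            exact ⟨hmem, hx.1.2⟩)
        · rw [Finset.card_eq_sum_ones]
          refine Finset.sum_le_sum fun x hx => ?_
          rw [Finset.mem_sdiff, hB, Finset.mem_filter, Multiset.mem_toFinset] at hx
          exact Multiset.count_pos.mpr hx.1.1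
    _ = ∑ x ∈ (A ∩ B) ∪ (B \ A), (derivative p).roots.count x + 1 := by
        rw [Finset.sum_union]
        · ring
        · exact Finset.disjoint_left.mpr fun x hx hx' =>
            (Finset.mem_sdiff.mp hx').2 (Finset.mem_inter.mp hx).1
    _ ≤ ∑ x ∈ B, (derivative p).roots.count x + 1 := by
        gcongr with x hx
        · intro x hx
          rw [Finset.mem_union, Finset.mem_inter, Finset.mem_sdiff] at hx
          rcases hx with h | h
          · exact h.2
          · exact h.1
    _ = ((derivative p).roots.filter (fun x => (0:ℝ) < x)).card + 1 := by
        rw [card_filter_eq_sum_count]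

lemma fewnomial_aux : ∀ d : ℕ, ∀ p : ℝ[X], p ≠ 0 → p.natDegree ≤ d →
    (p.roots.filter (fun x => (0:ℝ) < x)).card < p.support.card := by
  intro d
  induction d with
  | zero =>
    intro p hp hdeg
    obtain ⟨c, rfl⟩ := natDegree_eq_zero.mp (Nat.le_zero.mp hdeg)
    have hc : c ≠ 0 := fun h => hp (by simp [h])
    simp [roots_C, support_C hc]
  | succ d IH =>
    intro p hp hdeg
    by_cases h0 : p.coeff 0 = 0
    · obtain ⟨q, rfl⟩ : X ∣ p := X_dvd_iff.mpr h0
      have hq : q ≠ 0 := fun h => hp (by simp [h])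
      have hdegq : q.natDegree ≤ d := by
        have := natDegree_X_mul hq
        omega
      have hroots : ((X * q).roots.filter (fun x => (0:ℝ) < x)).card
          = (q.roots.filter (fun x => (0:ℝ) < x)).card := by
        rw [roots_mul (mul_ne_zero X_ne_zero hq), roots_X, Multiset.filter_add]
        simp [Multiset.filter_singleton]
      have hsupp : (X * q).support.card = q.support.card := by
        have : (X * q).support = q.support.map ⟨Nat.succ, Nat.succ_injective⟩ := by
          ext m
          simp only [mem_support_iff, Finset.mem_map, Function.Embedding.coeFn_mk]
          cases m with
          | zero => simp [coeff_zero_eq_eval_zero]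
          | succ i =>
            rw [coeff_X_mul]
            constructor
            · intro h; exact ⟨i, h, rfl⟩
            · rintro ⟨j, hj, hji⟩
              obtain rfl : j = i := Nat.succ_injective hji
              exact hj
        rw [this, Finset.card_map]
      rw [hroots, hsupp]
      exact IH q hq hdegq
    · by_cases hd0 : derivative p = 0
      · rw [eq_C_of_derivative_eq_zero hd0]
        simp [roots_C, support_C h0]
      · have h1 := posRoots_card_le_derivative p hd0
        have hnd : p.natDegree ≠ 0 := by
          intro h
          obtain ⟨c, rfl⟩ := natDegree_eq_zero.mp h
          simp at hd0
        have h2 : (derivative p).natDegree ≤ d := by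
          have := natDegree_derivative_lt hnd
          omega
        have h3 := IH (derivative p) hd0 h2
        have h4 : (derivative p).support.card + 1 ≤ p.support.card := by
          have hinj : ∀ i ∈ (derivative p).support, i + 1 ∈ p.support.erase 0 := by
            intro i hi
            rw [mem_support_iff, coeff_derivative] at hi
            have : p.coeff (i + 1) ≠ 0 := fun h => hi (by simp [h])
            exact Finset.mem_erase.mpr ⟨Nat.succ_ne_zero i, mem_support_iff.mpr this⟩
          have hcard : (derivative p).support.card ≤ (p.support.erase 0).card :=
            Finset.card_le_card_of_injOn (· + 1) hinj fun a _ b _ h => by simpa using h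
          have h0mem : (0 : ℕ) ∈ p.support := mem_support_iff.mpr h0
          rw [Finset.card_erase_of_mem h0mem] at hcard
          have : 1 ≤ p.support.card := Finset.card_pos.mpr ⟨0, h0mem⟩
          omega
        omega

lemma fewnomial_vanish (p : ℝ[X]) (S : Finset ℝ) (μ : ℝ → ℕ)
    (hpos : ∀ r ∈ S, 0 < r) (hμ : ∀ r ∈ S, 0 < μ r)
    (hdvd : ∀ r ∈ S, (X - C r) ^ μ r ∣ p)
    (hcard : p.support.card ≤ ∑ r ∈ S, μ r) : p = 0 := by
  by_contra hp
  have key : ∑ r ∈ S, μ r ≤ (p.roots.filter (fun x => (0:ℝ) < x)).card := by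
    have hSsub : S ⊆ p.roots.toFinset.filter (fun x => (0:ℝ) < x) := by
      intro r hr
      rw [Finset.mem_filter, Multiset.mem_toFinset, mem_roots hp]
      refine ⟨?_, hpos r hr⟩
      have : 1 ≤ p.rootMultiplicity r := by
        rw [le_rootMultiplicity_iff hp]
        exact dvd_trans (pow_dvd_pow _ (hμ r hr)) (hdvd r hr)
      exact (rootMultiplicity_pos hp).mp (by omega)
    calc ∑ r ∈ S, μ r ≤ ∑ r ∈ S, p.roots.count r := by
          refine Finset.sum_le_sum fun r hr => ?_
          rw [count_roots]
          exact (le_rootMultiplicity_iff hp).mpr (hdvd r hr)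
      _ ≤ ∑ r ∈ p.roots.toFinset.filter (fun x => (0:ℝ) < x), p.roots.count r :=
          Finset.sum_le_sum_of_subset hSsub
      _ = (p.roots.filter (fun x => (0:ℝ) < x)).card := by
          rw [← Multiset.toFinset_sum_count_eq (p.roots.filter _), Multiset.toFinset_filter]
          exact (Finset.sum_congr rfl fun x hx => by
            rw [Multiset.count_filter_of_pos (Finset.mem_filter.mp hx).2]).symm
  have := fewnomial_aux p.natDegree p hp le_rfl
  omega

lemma sq_dvd_of_root_deriv (p : ℝ[X]) (t : ℝ) (h1 : p.eval t = 0)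
    (h2 : (derivative p).eval t = 0) : (X - C t) ^ 2 ∣ p := by
  obtain ⟨g, rfl⟩ := dvd_iff_isRoot.mpr h1
  have hd : derivative ((X - C t) * g) = g + (X - C t) * derivative g := by
    rw [derivative_mul]; simp
  rw [hd] at h2
  simp only [eval_add, eval_mul, eval_sub, eval_X, eval_C, sub_self, zero_mul, add_zero] at h2
  obtain ⟨h, rfl⟩ := dvd_iff_isRoot.mpr h2
  exact ⟨h, by ring⟩

lemma dual_vanish (N K : ℕ) (hK : N ≤ 2 * K + 1) (a : Fin N → ℕ)
    (ha1 : ∀ i, 0 < a i) (hainj : Function.Injective a)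
    (r : Fin K → ℝ) (hr0 : ∀ j, 0 < r j) (hr1 : ∀ j, r j < 1)
    (hrinj : Function.Injective r)
    (f : (Fin N → ℝ) →ₗ[ℝ] ℝ)
    (h0 : f (fun i => 1 / (a i : ℝ)) = 0)
    (hb : ∀ j, f (fun i => r j ^ a i / (a i : ℝ)) = 0)
    (hq : ∀ j, f (fun i => r j ^ (a i - 1)) = 0) : f = 0 := by
  set lam : Fin N → ℝ := fun i => f (fun j => if i = j then 1 else 0) with hlam
  have hfeval : ∀ x : Fin N → ℝ, f x = ∑ i, x i * lam i := by
    intro x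
    rw [LinearMap.pi_apply_eq_sum_univ f x]
    exact Finset.sum_congr rfl fun i _ => by rw [smul_eq_mul]
  have hane : ∀ i, ((a i : ℝ)) ≠ 0 := fun i => Nat.cast_ne_zero.mpr (ha1 i).ne'
  set p : ℝ[X] := ∑ i, Polynomial.C (lam i / (a i : ℝ)) * X ^ a i with hp
  have hpeval : ∀ t : ℝ, p.eval t = ∑ i, lam i / (a i : ℝ) * t ^ a i := by
    intro t; rw [hp]; simp [eval_finset_sum]
  have hpder : derivative p = ∑ i, Polynomial.C (lam i) * X ^ (a i - 1) := by
    rw [hp, derivative_sum]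
    refine Finset.sum_congr rfl fun i _ => ?_
    rw [derivative_C_mul_X_pow]
    congr 1
    rw [div_mul_cancel₀ _ (hane i)]
  have hdeval : ∀ t : ℝ, (derivative p).eval t = ∑ i, lam i * t ^ (a i - 1) := by
    intro t; rw [hpder]; simp [eval_finset_sum]
  -- roots
  have hroot1 : p.eval 1 = 0 := by
    rw [hpeval]
    rw [hfeval] at h0
    rw [← h0]
    exact Finset.sum_congr rfl fun i _ => by rw [one_pow]; ring
  have hrootr : ∀ j, p.eval (r j) = 0 := by
    intro j
    rw [hpeval]
    have := hb j; rw [hfeval] at this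
    rw [← this]
    exact Finset.sum_congr rfl fun i _ => by ring
  have hrootd : ∀ j, (derivative p).eval (r j) = 0 := by
    intro j
    rw [hdeval]
    have := hq j; rw [hfeval] at this
    rw [← this]
    exact Finset.sum_congr rfl fun i _ => by ring
  -- apply fewnomial
  set S : Finset ℝ := insert 1 (Finset.image r Finset.univ) with hS
  have h1nmem : (1 : ℝ) ∉ Finset.image r Finset.univ := by
    simp only [Finset.mem_image, Finset.mem_univ, true_and, not_exists]
    intro j
    exact (hr1 j).ne
  have hp0 : p = 0 := by
    refine fewnomial_vanish p S (fun t => if t = 1 then 1 else 2) ?_ ?_ ?_ ?_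
    · intro t ht
      rw [hS, Finset.mem_insert] at ht
      rcases ht with rfl | ht
      · exact one_pos
      · obtain ⟨j, _, rfl⟩ := Finset.mem_image.mp ht
        exact hr0 j
    · intro t _; by_cases h : t = 1 <;> simp [h]
    · intro t ht
      rw [hS, Finset.mem_insert] at ht
      rcases ht with rfl | ht
      · show ((X - C 1) ^ (if (1:ℝ) = 1 then 1 else 2)) ∣ p
        rw [if_pos rfl, pow_one]
        exact dvd_iff_isRoot.mpr hroot1
      · obtain ⟨j, _, rfl⟩ := Finset.mem_image.mp ht
        show ((X - C (r j)) ^ (if r j = (1:ℝ) then 1 else 2)) ∣ p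
        rw [if_neg (hr1 j).ne]
        exact sq_dvd_of_root_deriv p _ (hrootr j) (hrootd j)
    · have hsum : ∑ t ∈ S, (if t = 1 then 1 else 2) = 1 + 2 * K := by
        rw [hS, Finset.sum_insert h1nmem, if_pos rfl]
        have hc : ∀ t ∈ Finset.image r Finset.univ, (if t = 1 then 1 else 2) = 2 := by
          intro t ht
          obtain ⟨j, _, rfl⟩ := Finset.mem_image.mp ht
          rw [if_neg (hr1 j).ne]
        rw [Finset.sum_congr rfl hc, Finset.sum_const,
          Finset.card_image_of_injective _ hrinj]
        simp [mul_comm]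
      rw [hsum]
      have hsupp : p.support ⊆ Finset.image a Finset.univ := by
        intro m hm
        rw [mem_support_iff, hp, finset_sum_coeff] at hm
        by_contra hmem
        apply hm
        refine Finset.sum_eq_zero fun i _ => ?_
        rw [coeff_C_mul, coeff_X_pow, if_neg, mul_zero]
        intro h
        exact hmem (Finset.mem_image.mpr ⟨i, Finset.mem_univ i, h.symm⟩)
      calc p.support.card ≤ (Finset.image a Finset.univ).card := Finset.card_le_card hsupp
        _ ≤ N := le_trans (Finset.card_image_le) (by simp)
        _ ≤ 1 + 2 * K := by omega
  -- extract coefficients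
  have hlam0 : ∀ i, lam i = 0 := by
    intro i
    have : p.coeff (a i) = lam i / (a i : ℝ) := by
      rw [hp, finset_sum_coeff]
      rw [Finset.sum_eq_single i]
      · rw [coeff_C_mul, coeff_X_pow, if_pos rfl, mul_one]
      · intro j _ hji
        rw [coeff_C_mul, coeff_X_pow, if_neg (fun h => hji (hainj h.symm)), mul_zero]
      · intro h; exact absurd (Finset.mem_univ i) h
    rw [hp0, coeff_zero] at this
    exact (div_eq_zero_iff.mp this.symm).resolve_right (hane i)
  refine LinearMap.ext fun x => ?_
  rw [hfeval]
  simp [hlam0]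

end AuxPoly

noncomputable def expo {N : ℕ} (i : Fin N) : ℕ := (i.1 + 2).choose 2

noncomputable def u0 (N : ℕ) : Fin N → ℝ := fun i => 1 / (expo i : ℝ)
noncomputable def gfun (N : ℕ) (s : ℝ) : Fin N → ℝ := fun i => s ^ expo i / (expo i : ℝ)
noncomputable def gd (N : ℕ) (s : ℝ) : Fin N → ℝ := fun i => s ^ (expo i - 1)

noncomputable def Phi (N K : ℕ) (θ : ℝ × (Fin K → ℝ) × (Fin K → ℝ)) : Fin N → ℝ :=
  θ.1 • u0 N + ∑ j, θ.2.1 j • gfun N (θ.2.2 j)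

lemma expo_pos {N : ℕ} (i : Fin N) : 0 < expo i := by
  unfold expo
  have : (2).choose 2 ≤ (i.1+2).choose 2 := Nat.choose_le_choose 2 (by omega)
  simpa using lt_of_lt_of_le (by norm_num) this

lemma expo_ne {N : ℕ} (i : Fin N) : ((expo i : ℝ)) ≠ 0 :=
  Nat.cast_ne_zero.mpr (expo_pos i).ne'

lemma gfun_hasDeriv (N : ℕ) (s : ℝ) :
    HasStrictDerivAt (gfun N) (gd N s) s := by
  rw [hasStrictDerivAt_pi]
  intro i
  have h1 : HasStrictDerivAt (fun t : ℝ => t ^ expo i / (expo i : ℝ))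
      ((expo i : ℝ) * s ^ (expo i - 1) / (expo i : ℝ)) s :=
    (hasStrictDerivAt_pow (expo i) s).div_const _
  have h2 : ((expo i : ℝ)) * s ^ (expo i - 1) / (expo i : ℝ) = s ^ (expo i - 1) :=
    mul_div_cancel_left₀ _ (expo_ne i)
  rw [h2] at h1
  exact h1

lemma phi_deriv (N K : ℕ) (θ0 : ℝ × (Fin K → ℝ) × (Fin K → ℝ)) :
    ∃ L : (ℝ × (Fin K → ℝ) × (Fin K → ℝ)) →L[ℝ] (Fin N → ℝ),
      HasStrictFDerivAt (Phi N K) L θ0 ∧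
      L (1, 0, 0) = u0 N ∧
      (∀ j, L (0, Pi.single j 1, 0) = gfun N (θ0.2.2 j)) ∧
      (∀ j, L (0, 0, Pi.single j 1) = θ0.2.1 j • gd N (θ0.2.2 j)) := by
  let M0 : (ℝ × (Fin K → ℝ) × (Fin K → ℝ)) →L[ℝ] (Fin N → ℝ) := (ContinuousLinearMap.fst ℝ ℝ _).smulRight (u0 N)
  let cj : Fin K → ((ℝ × (Fin K → ℝ) × (Fin K → ℝ)) →L[ℝ] ℝ) := fun j =>
    (ContinuousLinearMap.proj j).comp
      ((ContinuousLinearMap.fst ℝ (Fin K → ℝ) (Fin K → ℝ)).comp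
        (ContinuousLinearMap.snd ℝ ℝ _))
  let lj : Fin K → ((ℝ × (Fin K → ℝ) × (Fin K → ℝ)) →L[ℝ] ℝ) := fun j =>
    (ContinuousLinearMap.proj j).comp
      ((ContinuousLinearMap.snd ℝ (Fin K → ℝ) (Fin K → ℝ)).comp
        (ContinuousLinearMap.snd ℝ ℝ _))
  let Gj : Fin K → ((ℝ × (Fin K → ℝ) × (Fin K → ℝ)) →L[ℝ] (Fin N → ℝ)) := fun j =>
    ((1 : ℝ →L[ℝ] ℝ).smulRight (gd N (θ0.2.2 j))).comp (lj j)
  let Dj : Fin K → ((ℝ × (Fin K → ℝ) × (Fin K → ℝ)) →L[ℝ] (Fin N → ℝ)) := fun j =>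
    θ0.2.1 j • Gj j + (cj j).smulRight (gfun N (θ0.2.2 j))
  refine ⟨M0 + ∑ j, Dj j, ?_, ?_, ?_, ?_⟩
  · have h0 : HasStrictFDerivAt (fun θ : ℝ × (Fin K → ℝ) × (Fin K → ℝ) => θ.1 • u0 N) M0 θ0 := by
      have := M0.hasStrictFDerivAt (x := θ0)
      convert this using 1
      funext θ; simp [M0]
    have hterm : ∀ j : Fin K, ∀ _ : j ∈ Finset.univ,
        HasStrictFDerivAt (fun θ : ℝ × (Fin K → ℝ) × (Fin K → ℝ) => θ.2.1 j • gfun N (θ.2.2 j)) (Dj j) θ0 := by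
      intro j _
      have hc : HasStrictFDerivAt (fun θ : ℝ × (Fin K → ℝ) × (Fin K → ℝ) => θ.2.1 j) (cj j) θ0 :=
        (cj j).hasStrictFDerivAt
      have hl : HasStrictFDerivAt (fun θ : ℝ × (Fin K → ℝ) × (Fin K → ℝ) => θ.2.2 j) (lj j) θ0 :=
        (lj j).hasStrictFDerivAt
      have hg : HasStrictFDerivAt (fun θ : ℝ × (Fin K → ℝ) × (Fin K → ℝ) => gfun N (θ.2.2 j)) (Gj j) θ0 := by
        have hgd := gfun_hasDeriv N (θ0.2.2 j)
        rw [hasStrictDerivAt_iff_hasStrictFDerivAt] at hgd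
        exact hgd.comp θ0 hl
      exact hc.smul hg
    have := h0.add (HasStrictFDerivAt.sum hterm)
    unfold Phi
    rw [show ((fun θ : ℝ × (Fin K → ℝ) × (Fin K → ℝ) => θ.1 • u0 N) + ∑ i, fun θ : ℝ × (Fin K → ℝ) × (Fin K → ℝ) => θ.2.1 i • gfun N (θ.2.2 i)) = fun θ : ℝ × (Fin K → ℝ) × (Fin K → ℝ) => θ.1 • u0 N + ∑ j, θ.2.1 j • gfun N (θ.2.2 j) from by funext θ; simp [Finset.sum_apply]] at this
    exact this
  · simp only [ContinuousLinearMap.add_apply, ContinuousLinearMap.sum_apply,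
      ContinuousLinearMap.smulRight_apply, ContinuousLinearMap.smul_apply,
      ContinuousLinearMap.comp_apply, ContinuousLinearMap.coe_fst',
      ContinuousLinearMap.coe_snd', ContinuousLinearMap.proj_apply,
      ContinuousLinearMap.one_apply, M0, Dj, Gj, cj, lj]
    simp
  · intro j
    simp only [ContinuousLinearMap.add_apply, ContinuousLinearMap.sum_apply,
      ContinuousLinearMap.smulRight_apply, ContinuousLinearMap.smul_apply,
      ContinuousLinearMap.comp_apply, ContinuousLinearMap.coe_fst',
      ContinuousLinearMap.coe_snd', ContinuousLinearMap.proj_apply,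
      ContinuousLinearMap.one_apply, M0, Dj, Gj, cj, lj]
    simp [Pi.single_apply]
  · intro j
    simp only [ContinuousLinearMap.add_apply, ContinuousLinearMap.sum_apply,
      ContinuousLinearMap.smulRight_apply, ContinuousLinearMap.smul_apply,
      ContinuousLinearMap.comp_apply, ContinuousLinearMap.coe_fst',
      ContinuousLinearMap.coe_snd', ContinuousLinearMap.proj_apply,
      ContinuousLinearMap.one_apply, M0, Dj, Gj, cj, lj]
    simp [Pi.single_apply]

lemma abel_sum (y R : ℕ → ℝ) (m : ℕ) :
    ∑ t ∈ Finset.range m, y (t+1) * (R t - R (t+1))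
      = (∑ t ∈ Finset.range m, (y (t+1) - y t) * R t) + y 0 * R 0 - y m * R m := by
  induction m with
  | zero => simp
  | succ m ih => rw [Finset.sum_range_succ, Finset.sum_range_succ, ih]; ring


lemma phi_mem_coal (n k : ℕ) (hn : 3 ≤ n) (hk2 : 2 ≤ k)
    (θ : ℝ × (Fin (k-1) → ℝ) × (Fin (k-1) → ℝ))
    (hq0 : ∀ j, 0 < θ.2.2 j) (hq1 : ∀ j, θ.2.2 j < 1)
    (hdec : ∀ j j' : Fin (k-1), j < j' → θ.2.2 j' < θ.2.2 j)
    (hy : ∀ m : ℕ, m ≤ k - 1 →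
      0 < θ.1 + ∑ l ∈ Finset.range m, (if h : l < k - 1 then θ.2.1 ⟨l, h⟩ else 0)) :
    Phi (n-1) (k-1) θ ∈ Coal n k := by
  have hkK : k = (k-1) + 1 := by omega
  set bn : ℕ → ℝ := fun l => if h : l < k-1 then θ.2.1 ⟨l, h⟩ else 0 with hbn
  set Q : ℕ → ℝ := fun m => if h : m - 1 < k-1 ∧ 1 ≤ m then θ.2.2 ⟨m-1, h.1⟩ else 1 with hQdef
  set xx : ℕ → ℝ := fun l => Q l / Q (l-1) with hxx
  set yy : ℕ → ℝ := fun j => θ.1 + ∑ l ∈ Finset.range (j-1), bn l with hyy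
  have hQpos : ∀ m, 0 < Q m := by
    intro m; rw [hQdef]; dsimp only; split
    · exact hq0 _
    · exact one_pos
  have hQ0 : Q 0 = 1 := by rw [hQdef]; simp
  have hQeq : ∀ t (ht : t < k-1), Q (t+1) = θ.2.2 ⟨t, ht⟩ := by
    intro t ht; rw [hQdef]; dsimp only
    rw [dif_pos (⟨by omega, by omega⟩ : t + 1 - 1 < k-1 ∧ 1 ≤ t + 1)]
    simp
  have hQdec : ∀ m, 1 ≤ m → m ≤ k-1 → Q m < Q (m-1) := by
    intro m h1 h2
    obtain ⟨t, rfl⟩ : ∃ t, m = t + 1 := ⟨m - 1, by omega⟩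
    rw [hQeq t (by omega)]
    simp only [Nat.add_sub_cancel]
    rcases Nat.eq_zero_or_pos t with rfl | ht
    · rw [hQ0]; exact hq1 _
    · obtain ⟨s, rfl⟩ : ∃ s, t = s + 1 := ⟨t - 1, by omega⟩
      rw [hQeq s (by omega)]
      exact hdec _ _ (Fin.mk_lt_mk.mpr (by omega))
  refine ⟨xx, yy, ?_, ?_, ?_⟩
  · intro j h1 h2
    constructor
    · exact div_pos (hQpos j) (hQpos (j-1))
    · rw [hxx]; dsimp only
      rw [div_lt_one (hQpos (j-1))]
      exact hQdec j h1 h2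
  · intro j h1 h2
    exact hy (j-1) (by omega)
  · funext i
    set a := expo i with ha
    have hprodQ : ∀ m, m ≤ k-1 → ∏ l ∈ Finset.Icc 1 m, xx l = Q m := by
      intro m
      induction m with
      | zero => intro _; simp [hQ0]
      | succ m ih =>
        intro hm
        rw [Finset.prod_Icc_succ_top (by omega), ih (by omega)]
        rw [hxx]; dsimp only
        simp only [Nat.add_sub_cancel]
        rw [mul_comm, div_mul_cancel₀ _ (hQpos m).ne']
    set R : ℕ → ℝ := fun m => if m = k then 0 else Q m ^ a with hR
    have hterm : ∀ t, t < k →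
        yy (1+t) * (∏ l ∈ Finset.Icc 1 (1+t-1), xx l ^ a) *
          (1 - (if 1+t = k then (0:ℝ) else xx (1+t)) ^ a)
        = yy (t+1) * (R t - R (t+1)) := by
      intro t ht
      have h1t : 1 + t - 1 = t := by omega
      rw [h1t, Finset.prod_pow, hprodQ t (by omega), add_comm 1 t]
      by_cases hjk : t + 1 = k
      · rw [if_pos hjk]
        rw [zero_pow (expo_pos i).ne']
        rw [hR]; dsimp only
        rw [if_neg (by omega), if_pos hjk]
        ring
      · rw [if_neg hjk]
        have hmul : Q t ^ a * (xx (t+1)) ^ a = Q (t+1) ^ a := by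
          rw [← mul_pow, hxx]; dsimp only
          simp only [Nat.add_sub_cancel]
          rw [mul_comm, div_mul_cancel₀ _ (hQpos t).ne']
        rw [hR]; dsimp only
        rw [if_neg (by omega), if_neg hjk]
        calc yy (t+1) * Q t ^ a * (1 - xx (t+1) ^ a)
            = yy (t+1) * (Q t ^ a - Q t ^ a * xx (t+1) ^ a) := by ring
          _ = yy (t+1) * (Q t ^ a - Q (t+1) ^ a) := by rw [hmul]
    have hsum1 : ∑ j ∈ Finset.Icc 1 k,
        yy j * (∏ l ∈ Finset.Icc 1 (j-1), xx l ^ a) *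
          (1 - (if j = k then (0:ℝ) else xx j) ^ a)
        = ∑ t ∈ Finset.range k, yy (t+1) * (R t - R (t+1)) := by
      rw [← Finset.Ico_add_one_right_eq_Icc, Finset.sum_Ico_eq_sum_range]
      simp only [Nat.add_sub_cancel, Nat.succ_sub_one]
      refine Finset.sum_congr rfl fun t ht => ?_
      exact hterm t (Finset.mem_range.mp ht)
    have hy0 : yy 0 = θ.1 := by rw [hyy]; simp
    have hy1 : yy 1 = θ.1 := by rw [hyy]; simp
    have hyk : yy k * R k = 0 := by rw [hR]; simp
    have hdelta : ∀ t, 1 ≤ t → yy (t+1) - yy t = bn (t-1) := by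
      intro t ht
      obtain ⟨s, rfl⟩ : ∃ s, t = s + 1 := ⟨t - 1, by omega⟩
      rw [hyy]; dsimp only
      simp only [Nat.add_sub_cancel]
      rw [Finset.sum_range_succ]
      ring
    have hsum2 : ∑ t ∈ Finset.range k, (yy (t+1) - yy t) * R t
        = ∑ j : Fin (k-1), θ.2.1 j * θ.2.2 j ^ a := by
      conv_lhs => rw [hkK]
      rw [Finset.sum_range_succ']
      have hc0 : (yy (0+1) - yy 0) * R 0 = 0 := by
        rw [hyy]; simp
      rw [hc0, add_zero]
      rw [← Fin.sum_univ_eq_sum_range (fun t => (yy (t+1+1) - yy (t+1)) * R (t+1)) (k-1)]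
      refine Finset.sum_congr rfl fun j _ => ?_
      rw [hdelta (j.val+1) (by omega)]
      simp only [Nat.add_sub_cancel]
      rw [hR]; dsimp only
      rw [if_neg (by have := j.isLt; omega : ¬ (j.val+1 = k))]
      rw [hQeq j.val j.isLt]
      rw [hbn]; dsimp only
      rw [dif_pos j.isLt]
    have hchi : chi n k xx yy i = (1 / (expo i : ℝ)) *
        ∑ j ∈ Finset.Icc 1 k, yy j * (∏ l ∈ Finset.Icc 1 (j-1), xx l ^ expo i) *
          (1 - (if j = k then (0:ℝ) else xx j) ^ expo i) := rfl
    have hS : ∑ j ∈ Finset.Icc 1 k, yy j * (∏ l ∈ Finset.Icc 1 (j-1), xx l ^ expo i) *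
          (1 - (if j = k then (0:ℝ) else xx j) ^ expo i)
        = θ.1 + ∑ j : Fin (k-1), θ.2.1 j * θ.2.2 j ^ a := by
      rw [← ha, hsum1, abel_sum yy R k, hsum2, hyk, hy0]
      have hR0 : R 0 = 1 := by
        rw [hR]; dsimp only
        rw [if_neg (by omega), hQ0, one_pow]
      rw [hR0]
      ring
    show Phi (n-1) (k-1) θ i = chi n k xx yy i
    rw [hchi, ← ha, hS]
    show θ.1 * u0 (n-1) i + (∑ j : Fin (k-1), θ.2.1 j • gfun (n-1) (θ.2.2 j)) i
      = 1 / (a:ℝ) * (θ.1 + ∑ j : Fin (k-1), θ.2.1 j * θ.2.2 j ^ a)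
    rw [Finset.sum_apply]
    unfold u0 gfun
    rw [← ha]
    rw [mul_add, Finset.mul_sum]
    congr 1
    · ring
    · refine Finset.sum_congr rfl fun j _ => ?_
      rw [Pi.smul_apply, smul_eq_mul]
      ring

lemma expo_injective {N : ℕ} : Function.Injective (fun i : Fin N => expo i) := by
  have hmono : StrictMono (fun m : ℕ => (m+2).choose 2) := by
    apply strictMono_nat_of_lt_succ
    intro m
    show (m+2).choose 2 < (m+1+2).choose 2
    have : (m+1+2).choose 2 = (m+2).choose 1 + (m+2).choose 2 :=
      Nat.choose_succ_succ (m+2) 1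
    rw [this, Nat.choose_one_right]
    exact Nat.lt_add_of_pos_left (by omega)
  intro i j h
  exact Fin.ext (hmono.injective h)


/-- For every `n ≥ 3` and every `k ≥ ⌈n/2⌉` (note `⌈n/2⌉ = (n+1)/2` in
natural-number division), the normalized coalescence manifold `Ĉ_{n,k}` has nonempty
interior relative to the affine hyperplane `H = {v : v₂ + ⋯ + v_n = 1}`: there is a point
of `Ĉ_{n,k}` together with an open neighborhood of it in `H` contained in `Ĉ_{n,k}`. -/
theorem coalHat_full_dimensional (n k : ℕ) (hn : 3 ≤ n) (hk : (n + 1) / 2 ≤ k) :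
    ∃ p ∈ CoalHat n k, ∃ ε : ℝ, 0 < ε ∧
      ∀ q : Fin (n - 1) → ℝ, (∑ i, q i) = 1 → dist q p < ε → q ∈ CoalHat n k := by
  have hk2 : 2 ≤ k := by omega
  set q0 : Fin (k-1) → ℝ := fun j => (2⁻¹:ℝ)^(j.val+1) with hq0def
  set θ0 : ℝ × (Fin (k-1) → ℝ) × (Fin (k-1) → ℝ) :=
    ((1:ℝ), (fun _ => (1:ℝ)), q0) with hθ0def
  have hq0pos : ∀ j, 0 < q0 j := fun j => by rw [hq0def]; positivity
  have hq0lt1 : ∀ j, q0 j < 1 := fun j => by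
    rw [hq0def]
    exact pow_lt_one₀ (by norm_num) (by norm_num) (Nat.succ_ne_zero _)
  have hq0dec : ∀ j j' : Fin (k-1), j < j' → q0 j' < q0 j := by
    intro j j' h
    rw [hq0def]
    exact pow_lt_pow_right_of_lt_one₀ (by norm_num) (by norm_num)
      (by have : j.val < j'.val := h; omega)
  have hq0inj : Function.Injective q0 := by
    intro j j' h
    by_contra hne
    rcases Ne.lt_or_gt hne with hlt | hlt
    · exact absurd h (ne_of_gt (hq0dec j j' hlt))
    · exact absurd h (ne_of_lt (hq0dec j' j hlt))
  obtain ⟨L, hL, hcolw, hcolb, hcolq⟩ := phi_deriv (n-1) (k-1) θ0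
  have hsurj : LinearMap.range L.toLinearMap = ⊤ := by
    by_contra hne
    obtain ⟨f, hf0, hker⟩ :=
      Submodule.exists_dual_map_eq_bot_of_lt_top (lt_top_iff_ne_top.mpr hne) inferInstance
    have hvan : ∀ v, v ∈ LinearMap.range L.toLinearMap → f v = 0 := by
      intro v hv
      have hm : f v ∈ Submodule.map f (LinearMap.range L.toLinearMap) := Submodule.mem_map_of_mem hv
      rw [hker] at hm
      simpa using hm
    apply hf0
    have h0 : f (u0 (n-1)) = 0 := hvan _ ⟨(1, 0, 0), hcolw⟩
    have hbj : ∀ j, f (gfun (n-1) (q0 j)) = 0 := fun j =>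
      hvan _ ⟨(0, Pi.single j 1, 0), hcolb j⟩
    have hqj : ∀ j, f (gd (n-1) (q0 j)) = 0 := by
      intro j
      have h1 := hvan _ ⟨(0, 0, Pi.single j 1), hcolq j⟩
      have h2 : θ0.2.1 j • gd (n-1) (θ0.2.2 j) = gd (n-1) (q0 j) := by
        rw [hθ0def]; exact one_smul _ _
      rwa [h2] at h1
    exact dual_vanish (n-1) (k-1) (by omega) (fun i => expo i) (fun i => expo_pos i)
      expo_injective q0 hq0pos hq0lt1 hq0inj f h0 hbj hqj
  have hmap := hL.map_nhds_eq_of_surj hsurj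
  -- eventual goodness
  have hcontq : ∀ j : Fin (k-1),
      Continuous (fun θ : ℝ × (Fin (k-1) → ℝ) × (Fin (k-1) → ℝ) => θ.2.2 j) :=
    fun j => (continuous_apply j).comp (continuous_snd.comp continuous_snd)
  have e1 : ∀ᶠ θ : ℝ × (Fin (k-1) → ℝ) × (Fin (k-1) → ℝ) in nhds θ0,
      ∀ j, 0 < θ.2.2 j :=
    Filter.eventually_all.mpr fun j =>
      ((hcontq j).continuousAt).eventually (eventually_gt_nhds (hq0pos j))
  have e2 : ∀ᶠ θ : ℝ × (Fin (k-1) → ℝ) × (Fin (k-1) → ℝ) in nhds θ0,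
      ∀ j, θ.2.2 j < 1 :=
    Filter.eventually_all.mpr fun j =>
      ((hcontq j).continuousAt).eventually (eventually_lt_nhds (hq0lt1 j))
  have e3 : ∀ᶠ θ : ℝ × (Fin (k-1) → ℝ) × (Fin (k-1) → ℝ) in nhds θ0,
      ∀ pr : Fin (k-1) × Fin (k-1), pr.1 < pr.2 → θ.2.2 pr.2 < θ.2.2 pr.1 := by
    refine Filter.eventually_all.mpr fun pr => ?_
    by_cases hpr : pr.1 < pr.2
    · have hlt : θ0.2.2 pr.2 < θ0.2.2 pr.1 := hq0dec pr.1 pr.2 hpr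
      have := ContinuousAt.eventually_lt ((hcontq pr.2).continuousAt)
        ((hcontq pr.1).continuousAt) hlt
      exact this.mono fun θ h _ => h
    · exact Filter.Eventually.of_forall fun θ h => absurd h hpr
  have e4 : ∀ᶠ θ : ℝ × (Fin (k-1) → ℝ) × (Fin (k-1) → ℝ) in nhds θ0,
      ∀ m ∈ Finset.range k,
        0 < θ.1 + ∑ l ∈ Finset.range m, (if h : l < k - 1 then θ.2.1 ⟨l, h⟩ else 0) := by
    refine (Filter.eventually_all_finset (Finset.range k)).mpr fun m _ => ?_
    have hcont : Continuous (fun θ : ℝ × (Fin (k-1) → ℝ) × (Fin (k-1) → ℝ) =>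
        θ.1 + ∑ l ∈ Finset.range m, (if h : l < k - 1 then θ.2.1 ⟨l, h⟩ else 0)) := by
      refine continuous_fst.add (continuous_finset_sum _ fun l _ => ?_)
      by_cases h : l < k - 1
      · simp only [dif_pos h]
        exact (continuous_apply _).comp (continuous_fst.comp continuous_snd)
      · simp only [dif_neg h]
        exact continuous_const
    have hval : 0 < θ0.1 + ∑ l ∈ Finset.range m,
        (if h : l < k - 1 then θ0.2.1 ⟨l, h⟩ else 0) := by
      have hnn : (0:ℝ) ≤ ∑ l ∈ Finset.range m,
          (if h : l < k - 1 then θ0.2.1 ⟨l, h⟩ else 0) := by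
        refine Finset.sum_nonneg fun l _ => ?_
        by_cases h : l < k - 1
        · rw [dif_pos h]
          rw [hθ0def]
          norm_num
        · rw [dif_neg h]
      have h1 : θ0.1 = 1 := by rw [hθ0def]
      rw [h1]
      linarith
    exact hcont.continuousAt.eventually (eventually_gt_nhds hval)
  have hmem : ∀ᶠ θ : ℝ × (Fin (k-1) → ℝ) × (Fin (k-1) → ℝ) in nhds θ0,
      Phi (n-1) (k-1) θ ∈ Coal n k := by
    filter_upwards [e1, e2, e3, e4] with θ h1 h2 h3 h4
    exact phi_mem_coal n k hn hk2 θ h1 h2 (fun j j' h => h3 (j, j') h)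
      (fun m hm => h4 m (Finset.mem_range.mpr (by omega)))
  set c0 : Fin (n-1) → ℝ := Phi (n-1) (k-1) θ0 with hc0def
  have hnhds : Coal n k ∈ nhds c0 := by
    rw [hc0def, ← hmap]
    exact hmem
  obtain ⟨ε, hεpos, hball⟩ := Metric.mem_nhds_iff.mp hnhds
  -- c0 ∈ Coal
  have hc0mem : c0 ∈ Coal n k := by
    rw [hc0def]
    refine phi_mem_coal n k hn hk2 θ0 hq0pos hq0lt1 hq0dec ?_
    intro m hm
    have hnn : (0:ℝ) ≤ ∑ l ∈ Finset.range m,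
        (if h : l < k - 1 then θ0.2.1 ⟨l, h⟩ else 0) := by
      refine Finset.sum_nonneg fun l _ => ?_
      by_cases h : l < k - 1
      · rw [dif_pos h]; rw [hθ0def]; norm_num
      · rw [dif_neg h]
    have h1 : θ0.1 = 1 := by rw [hθ0def]
    rw [h1]; linarith
  -- positivity of c0 coordinates
  have hc0pos : ∀ i, 0 < c0 i := by
    intro i
    rw [hc0def]
    show 0 < (θ0.1 • u0 (n-1) + ∑ j, θ0.2.1 j • gfun (n-1) (θ0.2.2 j)) i
    rw [Pi.add_apply, Finset.sum_apply]
    have hu : 0 < (θ0.1 • u0 (n-1)) i := by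
      rw [hθ0def, one_smul]
      exact div_pos one_pos (by exact_mod_cast expo_pos i)
    have hg : ∀ j : Fin (k-1), (0:ℝ) ≤ (θ0.2.1 j • gfun (n-1) (θ0.2.2 j)) i := by
      intro j
      rw [Pi.smul_apply, smul_eq_mul]
      have h1 : θ0.2.1 j = 1 := by rw [hθ0def]
      rw [h1, one_mul]
      exact div_nonneg (pow_nonneg (le_of_lt (hq0pos j)) _)
        (le_of_lt (by exact_mod_cast expo_pos i))
    exact add_pos_of_pos_of_nonneg hu (Finset.sum_nonneg fun j _ => hg j)
  set s : ℝ := ∑ i, c0 i with hsdef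
  have hspos : 0 < s := by
    rw [hsdef]
    exact Finset.sum_pos (fun i _ => hc0pos i) ⟨⟨0, by omega⟩, Finset.mem_univ _⟩
  refine ⟨s⁻¹ • c0, ⟨c0, hc0mem, rfl⟩, ε / s, div_pos hεpos hspos, ?_⟩
  intro q hqsum hqdist
  have hsq : s • q ∈ Coal n k := by
    apply hball
    rw [Metric.mem_ball]
    have hc0eq : c0 = s • (s⁻¹ • c0) := (smul_inv_smul₀ hspos.ne' c0).symm
    calc dist (s • q) c0 = dist (s • q) (s • (s⁻¹ • c0)) := by rw [← hc0eq]
      _ = ‖s‖ * dist q (s⁻¹ • c0) := dist_smul₀ s _ _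
      _ = s * dist q (s⁻¹ • c0) := by rw [Real.norm_eq_abs, abs_of_pos hspos]
      _ < s * (ε / s) := by
          exact mul_lt_mul_of_pos_left hqdist hspos
      _ = ε := by field_simp
  refine ⟨s • q, hsq, ?_⟩
  have hsum : ∑ i, (s • q) i = s := by
    simp only [Pi.smul_apply, smul_eq_mul, ← Finset.mul_sum, hqsum, mul_one]
  rw [hsum, inv_smul_smul₀ hspos.ne']
end

section
/- For every integer n ≥ 2 and every integer k ≥ 1, the coalescence manifold satisfies C_{n,k} ⊆ C_{n,2n−1}. Consequently, the expected first-coalescence-time vector of a sample of size n under any piecewise-constant demography, with any number of epochs, can be realized by a piecewise-constant demography with at most 2n−1 epochs. -/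
open Finset

noncomputable def Vv (n m : ℕ) (B z : ℕ → ℝ) : Fin (n - 1) → ℝ :=
  fun i => ∑ j ∈ Finset.Icc 1 m, z j * (B (j - 1) ^ (i.val + 2).choose 2 - B j ^ (i.val + 2).choose 2)

def GoodB (m : ℕ) (B z : ℕ → ℝ) : Prop :=
  B 0 = 1 ∧ B m = 0 ∧ (∀ p, p < m → B (p + 1) < B p) ∧ (∀ p, p < m → 0 < B p) ∧
    (∀ j, 1 ≤ j → j ≤ m → 0 < z j)

lemma tele (F : ℕ → ℝ) (a : ℕ) : ∀ b, a ≤ b →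
    ∑ p ∈ Finset.Icc (a + 1) b, (F (p - 1) - F p) = F a - F b := by
  intro b
  induction b with
  | zero => intro h; simp [show a = 0 by omega]
  | succ b ih =>
    intro h
    rcases Nat.lt_or_ge a (b + 1) with h' | h'
    · have hab : a ≤ b := by omega
      rw [Finset.sum_Icc_succ_top (by omega), ih hab]
      simp
    · have : a = b + 1 := by omega
      subst this; simp

lemma GoodB.strictAnti {m : ℕ} {B z : ℕ → ℝ} (h : GoodB m B z) :
    ∀ u w, u < w → w ≤ m → B w < B u := by
  intro u w huw hwm
  induction w with
  | zero => omega
  | succ w ih =>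
    rcases Nat.lt_or_ge u w with h' | h'
    · exact lt_trans (h.2.2.1 w (by omega)) (ih h' (by omega))
    · have : u = w := by omega
      subst this; exact h.2.2.1 u (by omega)

/-- Carathéodory for cones over a finite index set. -/
lemma cara {W : Type} [AddCommGroup W] [Module ℝ W] [Module.Finite ℝ W]
    (f : ℕ → W) : ∀ (N : ℕ) (V : Finset ℕ), V.card ≤ N → ∀ (c : ℕ → ℝ), (∀ i ∈ V, 0 ≤ c i) →
    ∃ S : Finset ℕ, S ⊆ V ∧ S.card ≤ Module.finrank ℝ W ∧ ∃ d : ℕ → ℝ,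
      (∀ i ∈ S, 0 ≤ d i) ∧ ∑ i ∈ S, d i • f i = ∑ i ∈ V, c i • f i := by
  intro N
  induction N with
  | zero =>
    intro V hV c _
    have : V = ∅ := Finset.card_eq_zero.mp (by omega)
    subst this
    exact ⟨∅, Finset.Subset.refl _, by simp, c, by simp, rfl⟩
  | succ N ih =>
    intro V hV c hc
    by_cases hli : LinearIndependent ℝ (fun i : {x // x ∈ V} => f i)
    · refine ⟨V, Finset.Subset.refl _, ?_, c, hc, rfl⟩
      have := hli.fintype_card_le_finrank
      simpa [Fintype.card_coe] using this
    · rw [Fintype.not_linearIndependent_iff] at hli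
      obtain ⟨g, hg0, i₁, hi₁⟩ := hli
      have key : ∀ μ : ℕ → ℝ, (∀ i (h : i ∈ V), μ i = g ⟨i, h⟩) →
          ∑ i ∈ V, μ i • f i = 0 := by
        intro μ hμ
        rw [← Finset.sum_attach V (fun i => μ i • f i)]
        rw [← hg0, Finset.univ_eq_attach]
        exact Finset.sum_congr rfl (fun i _ => by rw [hμ i.1 i.2])
      have hexists : ∃ ν : ℕ → ℝ, (∑ i ∈ V, ν i • f i = 0) ∧ ∃ i ∈ V, 0 < ν i := by
        by_cases hp : 0 < g i₁
        · exact ⟨fun i => if h : i ∈ V then g ⟨i, h⟩ else 0,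
            key _ (fun i h => dif_pos h), i₁.1, i₁.2, by simpa using hp⟩
        · refine ⟨fun i => if h : i ∈ V then -g ⟨i, h⟩ else 0, ?_, i₁.1, i₁.2, ?_⟩
          · have := key (fun i => if h : i ∈ V then g ⟨i, h⟩ else 0) (fun i h => dif_pos h)
            calc ∑ i ∈ V, (if h : i ∈ V then -g ⟨i, h⟩ else 0) • f i
                = -∑ i ∈ V, (if h : i ∈ V then g ⟨i, h⟩ else 0) • f i := by
                  rw [← Finset.sum_neg_distrib]
                  exact Finset.sum_congr rfl (fun i hi => by simp [dif_pos hi])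
              _ = 0 := by rw [this, neg_zero]
          · simp only [dif_pos i₁.2]
            have : g i₁ < 0 := lt_of_le_of_ne (not_lt.mp hp) hi₁
            simpa using this
      obtain ⟨ν, hν0, i₂, hi₂V, hi₂⟩ := hexists
      set P := V.filter (fun i => 0 < ν i) with hP
      have hPne : P.Nonempty := ⟨i₂, Finset.mem_filter.mpr ⟨hi₂V, hi₂⟩⟩
      obtain ⟨i₀, hi₀P, hmin⟩ := Finset.exists_min_image P (fun i => c i / ν i) hPne
      have hi₀V : i₀ ∈ V := (Finset.mem_filter.mp hi₀P).1
      have hν₀ : 0 < ν i₀ := (Finset.mem_filter.mp hi₀P).2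
      set r := c i₀ / ν i₀ with hr
      have hr0 : 0 ≤ r := div_nonneg (hc i₀ hi₀V) hν₀.le
      set c' : ℕ → ℝ := fun i => c i - r * ν i with hc'def
      have hc' : ∀ i ∈ V, 0 ≤ c' i := by
        intro i hiV
        by_cases hiP : i ∈ P
        · have hνi : 0 < ν i := (Finset.mem_filter.mp hiP).2
          have := hmin i hiP
          have : r * ν i ≤ c i := (le_div_iff₀ hνi).mp this
          simp only [hc'def]; linarith
        · have hνi : ν i ≤ 0 := by
            by_contra hcon
            exact hiP (Finset.mem_filter.mpr ⟨hiV, by linarith⟩)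
          have : r * ν i ≤ 0 := mul_nonpos_of_nonneg_of_nonpos hr0 hνi
          have := hc i hiV
          simp only [hc'def]; linarith
      have hc'i₀ : c' i₀ = 0 := by
        simp only [hc'def, hr]
        field_simp
        ring
      have hsum' : ∑ i ∈ V, c' i • f i = ∑ i ∈ V, c i • f i := by
        simp only [hc'def, sub_smul, Finset.sum_sub_distrib]
        have : ∑ i ∈ V, (r * ν i) • f i = r • ∑ i ∈ V, ν i • f i := by
          rw [Finset.smul_sum]
          exact Finset.sum_congr rfl (fun i _ => by rw [smul_smul])
        rw [this, hν0, smul_zero, sub_zero]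
      have herase : ∑ i ∈ V.erase i₀, c' i • f i = ∑ i ∈ V, c' i • f i :=
        Finset.sum_erase _ (by rw [hc'i₀, zero_smul])
      obtain ⟨S, hSsub, hScard, d, hd0, hdsum⟩ := ih (V.erase i₀)
        (by have := Finset.card_erase_of_mem hi₀V; omega)
        c' (fun i hi => hc' i (Finset.mem_of_mem_erase hi))
      exact ⟨S, hSsub.trans (Finset.erase_subset _ _), hScard, d, hd0,
        by rw [hdsum, herase, hsum']⟩

lemma mem_of_goodB (n m : ℕ) (hm : 1 ≤ m) (B z : ℕ → ℝ) (h : GoodB m B z) :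
    (fun i => (1 / ((i.val + 2).choose 2 : ℝ)) * Vv n m B z i) ∈ Coal n m := by
  obtain ⟨hB0, hBm, hdec, hpos, hz⟩ := h
  have hprod : ∀ r, r ≤ m - 1 → ∏ l ∈ Finset.Icc 1 r, (B l / B (l - 1)) = B r := by
    intro r
    induction r with
    | zero => intro _; simp [hB0]
    | succ r ih =>
      intro hr
      rw [Finset.prod_Icc_succ_top (by omega), ih (by omega)]
      have h1 : 0 < B r := hpos r (by omega)
      have : B r ≠ 0 := ne_of_gt h1
      rw [show r + 1 - 1 = r from rfl]
      field_simp
  refine ⟨fun j => B j / B (j - 1), z, ?_, fun j h1 h2 => hz j h1 h2, ?_⟩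
  · intro j h1 h2
    have hjm : j < m := by omega
    have hBj : 0 < B j := hpos j hjm
    have hBj1 : B j < B (j - 1) := by
      have := hdec (j - 1) (by omega)
      rwa [show j - 1 + 1 = j by omega] at this
    have hB1 : 0 < B (j - 1) := lt_trans hBj hBj1
    exact ⟨by positivity, by rw [div_lt_one hB1]; exact hBj1⟩
  · funext i
    unfold chi Vv
    congr 1
    apply Finset.sum_congr rfl
    intro j hj
    rw [Finset.mem_Icc] at hj
    set t := (i.val + 2).choose 2 with hT
    have ht : t ≠ 0 := (Nat.choose_pos (by omega)).ne'
    rw [Finset.prod_pow, hprod (j - 1) (by omega)]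
    by_cases hjm : j = m
    · subst hjm
      simp [hBm, zero_pow ht]
    · have hjm' : j < m := by omega
      have hBj : 0 < B j := hpos j hjm'
      have hB1 : 0 < B (j - 1) := hpos (j - 1) (by omega)
      rw [if_neg hjm, div_pow]
      have : B (j - 1) ^ t ≠ 0 := by positivity
      field_simp

lemma chi_to_V (n k : ℕ) (hk : 1 ≤ k) (x y : ℕ → ℝ)
    (hx : ∀ j, 1 ≤ j → j ≤ k - 1 → 0 < x j ∧ x j < 1)
    (hy : ∀ j, 1 ≤ j → j ≤ k → 0 < y j) :
    ∃ A : ℕ → ℝ, GoodB k A y ∧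
      chi n k x y = fun i => (1 / ((i.val + 2).choose 2 : ℝ)) * Vv n k A y i := by
  set A : ℕ → ℝ := fun j => if k ≤ j then 0 else ∏ l ∈ Finset.Icc 1 j, x l with hA
  have hA0 : A 0 = 1 := by simp [hA, Nat.not_le.mpr (by omega : 0 < k)]
  have hAk : A k = 0 := by simp [hA]
  have hApos : ∀ p, p < k → 0 < A p := by
    intro p hp
    simp only [hA, if_neg (Nat.not_le.mpr hp)]
    apply Finset.prod_pos
    intro l hl
    rw [Finset.mem_Icc] at hl
    exact (hx l hl.1 (by omega)).1
  have hAdec : ∀ p, p < k → A (p + 1) < A p := by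
    intro p hp
    rcases Nat.lt_or_ge (p + 1) k with h' | h'
    · have h1 : A (p + 1) = A p * x (p + 1) := by
        simp only [hA, if_neg (Nat.not_le.mpr h'), if_neg (Nat.not_le.mpr hp)]
        rw [Finset.prod_Icc_succ_top (by omega)]
      have hxp := hx (p + 1) (by omega) (by omega)
      have hap := hApos p hp
      rw [h1]
      nlinarith [hxp.1, hxp.2]
    · have : p + 1 = k := by omega
      rw [this, hAk]
      exact hApos p hp
  refine ⟨A, ⟨hA0, hAk, hAdec, hApos, hy⟩, ?_⟩
  funext i
  unfold chi Vv
  congr 1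
  apply Finset.sum_congr rfl
  intro j hj
  rw [Finset.mem_Icc] at hj
  set t := (i.val + 2).choose 2 with hT
  have ht : t ≠ 0 := (Nat.choose_pos (by omega)).ne'
  have hAj1 : A (j - 1) = ∏ l ∈ Finset.Icc 1 (j - 1), x l := by
    simp only [hA, if_neg (Nat.not_le.mpr (by omega : j - 1 < k))]
  rw [Finset.prod_pow, ← hAj1]
  by_cases hjk : j = k
  · subst hjk
    rw [if_pos rfl, hAk, zero_pow ht]
    ring
  · have hjk' : j < k := by omega
    have h1 : A j = A (j - 1) * x j := by
      simp only [hA, if_neg (Nat.not_le.mpr hjk'), if_neg (Nat.not_le.mpr (by omega : j - 1 < k))]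
      rw [show j = j - 1 + 1 by omega, Finset.prod_Icc_succ_top (by omega)]
      simp only [show j - 1 + 1 - 1 = j - 1 from by omega]
    rw [if_neg hjk, h1, mul_pow]
    ring

lemma pad_one (n m : ℕ) (hm : 1 ≤ m) (B z : ℕ → ℝ) (h : GoodB m B z) :
    ∃ B' z' : ℕ → ℝ, GoodB (m + 1) B' z' ∧ Vv n (m + 1) B' z' = Vv n m B z := by
  obtain ⟨hB0, hBm, hdec, hpos, hz⟩ := h
  set B' : ℕ → ℝ := fun p => if p < m then B p else if p = m then B (m - 1) / 2 else 0 with hB'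
  set z' : ℕ → ℝ := fun j => if j ≤ m then z j else z m with hz'
  have hBm1pos : 0 < B (m - 1) := hpos (m - 1) (by omega)
  have hB'eq : ∀ p, p < m → B' p = B p := fun p hp => by simp [hB', hp]
  refine ⟨B', z', ⟨?_, ?_, ?_, ?_, ?_⟩, ?_⟩
  · simp only [hB']
    rw [if_pos (by omega : 0 < m)]
    exact hB0
  · simp only [hB']
    rw [if_neg (by omega), if_neg (by omega)]
  · intro p hp
    rcases Nat.lt_or_ge (p + 1) m with h' | h'
    · rw [hB'eq _ h', hB'eq _ (by omega)]
      exact hdec p (by omega)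
    · rcases Nat.eq_or_lt_of_le h' with h'' | h''
      · have hp' : p < m := by omega
        have h1 : B' p = B p := hB'eq p hp'
        have h2 : B' (p + 1) = B (m - 1) / 2 := by
          simp only [hB']
          rw [if_neg (by omega), if_pos (by omega)]
        rw [h1, h2, show p = m - 1 by omega]
        linarith
      · have hp0 : p = m := by omega
        have h1 : B' p = B (m - 1) / 2 := by
          simp only [hB']
          rw [if_neg (by omega), if_pos (by omega)]
        have h2 : B' (p + 1) = 0 := by
          simp only [hB']
          rw [if_neg (by omega), if_neg (by omega)]
        rw [h1, h2]
        linarith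
  · intro p hp
    rcases Nat.lt_or_ge p m with h' | h'
    · rw [hB'eq p h']; exact hpos p h'
    · simp only [hB', if_neg (by omega : ¬ p < m), if_pos (by omega : p = m)]
      linarith
  · intro j h1 h2
    rcases le_or_gt j m with h' | h'
    · simp only [hz', if_pos h']; exact hz j h1 h'
    · simp only [hz', if_neg (by omega : ¬ j ≤ m)]; exact hz m (by omega) le_rfl
  · funext i
    unfold Vv
    set t := (i.val + 2).choose 2 with hT
    have ht : t ≠ 0 := (Nat.choose_pos (by omega)).ne'
    rw [Finset.sum_Icc_succ_top (by omega)]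
    have hsplit : ∀ w : ℕ → ℝ, ∑ j ∈ Finset.Icc 1 m, w j = ∑ j ∈ Finset.Icc 1 (m - 1), w j + w m := by
      intro w
      rw [show m = m - 1 + 1 by omega, Finset.sum_Icc_succ_top (by omega)]
      simp only [show m - 1 + 1 = m by omega]
    rw [hsplit, hsplit]
    have hcong : ∑ j ∈ Finset.Icc 1 (m - 1), z' j * (B' (j - 1) ^ t - B' j ^ t)
        = ∑ j ∈ Finset.Icc 1 (m - 1), z j * (B (j - 1) ^ t - B j ^ t) := by
      apply Finset.sum_congr rfl
      intro j hj
      rw [Finset.mem_Icc] at hj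
      rw [hB'eq (j - 1) (by omega), hB'eq j (by omega)]
      simp only [hz', if_pos (by omega : j ≤ m)]
    rw [hcong]
    have e1 : z' m = z m := by simp [hz']
    have e2 : z' (m + 1) = z m := by simp [hz']
    have e3 : B' (m - 1) = B (m - 1) := hB'eq _ (by omega)
    have e4 : B' m = B (m - 1) / 2 := by simp [hB']
    have e5 : B' (m + 1 - 1) = B (m - 1) / 2 := by
      rw [show m + 1 - 1 = m from rfl]; exact e4
    have e6 : B' (m + 1) = 0 := by
      simp only [hB']; rw [if_neg (by omega), if_neg (by omega)]
    rw [e1, e2, e3, e4, e5, e6, hBm, zero_pow ht]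
    ring

lemma pad (n m : ℕ) (hm : 1 ≤ m) : ∀ d (B z : ℕ → ℝ), GoodB m B z →
    ∃ B' z' : ℕ → ℝ, GoodB (m + d) B' z' ∧ Vv n (m + d) B' z' = Vv n m B z := by
  intro d
  induction d with
  | zero => intro B z h; exact ⟨B, z, h, rfl⟩
  | succ d ih =>
    intro B z h
    obtain ⟨B', z', hg, hv⟩ := ih B z h
    obtain ⟨B'', z'', hg', hv'⟩ := pad_one n (m + d) (by omega) B' z' hg
    exact ⟨B'', z'', by rwa [show m + (d + 1) = m + d + 1 by omega], by
      rw [show m + (d + 1) = m + d + 1 by omega, hv', hv]⟩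

lemma merge (n k : ℕ) (hn : 2 ≤ n) (hk : 1 ≤ k) (A y : ℕ → ℝ) (hG : GoodB k A y) :
    ∃ m B z, 1 ≤ m ∧ m ≤ 2 * n - 1 ∧ GoodB m B z ∧ Vv n m B z = Vv n k A y := by
  obtain ⟨hA0, hAk, hdec, hpos, hy⟩ := hG
  have hGood : GoodB k A y := ⟨hA0, hAk, hdec, hpos, hy⟩
  -- the minimum value ε
  obtain ⟨j₀, hj₀, hminy⟩ := Finset.exists_min_image (Finset.Icc 1 k) y
    ⟨1, Finset.mem_Icc.mpr ⟨le_rfl, hk⟩⟩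
  rw [Finset.mem_Icc] at hj₀
  set ε := y j₀ / 2 with hε
  have hεpos : 0 < ε := by
    have := hy j₀ hj₀.1 hj₀.2
    positivity
  have hεle : ∀ j ∈ Finset.Icc 1 k, ε ≤ y j := by
    intro j hj
    have h1 := hminy j hj
    have := hy j₀ hj₀.1 hj₀.2
    simp only [hε]; linarith
  -- Carathéodory
  set f : ℕ → (Fin (n - 1) → ℝ) :=
    fun j => fun i => A (j - 1) ^ (i.val + 2).choose 2 - A j ^ (i.val + 2).choose 2 with hf
  obtain ⟨S, hSsub, hScard, d, hd0, hdsum⟩ :=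
    cara f (Finset.Icc 1 k).card (Finset.Icc 1 k) le_rfl (fun j => y j - ε)
      (fun j hj => by have := hεle j hj; linarith)
  rw [Module.finrank_fin_fun] at hScard
  -- the breakpoint index set J
  set J : Finset ℕ := insert 0 (insert k (S ∪ S.image (· - 1))) with hJ
  have h0J : (0 : ℕ) ∈ J := Finset.mem_insert_self _ _
  have hkJ : k ∈ J := Finset.mem_insert.mpr (Or.inr (Finset.mem_insert_self _ _))
  have hSJ : ∀ j ∈ S, j ∈ J := fun j hj =>
    Finset.mem_insert.mpr (Or.inr (Finset.mem_insert.mpr (Or.inr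
      (Finset.mem_union.mpr (Or.inl hj)))))
  have hSJ' : ∀ j ∈ S, j - 1 ∈ J := fun j hj =>
    Finset.mem_insert.mpr (Or.inr (Finset.mem_insert.mpr (Or.inr
      (Finset.mem_union.mpr (Or.inr (Finset.mem_image_of_mem _ hj))))))
  have hJle : ∀ a ∈ J, a ≤ k := by
    intro a ha
    rw [hJ] at ha
    rcases Finset.mem_insert.mp ha with h | h
    · omega
    rcases Finset.mem_insert.mp h with h | h
    · omega
    rcases Finset.mem_union.mp h with h | h
    · exact (Finset.mem_Icc.mp (hSsub h)).2
    · obtain ⟨b, hb, rfl⟩ := Finset.mem_image.mp h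
      have := (Finset.mem_Icc.mp (hSsub hb)).2
      omega
  set K := J.card with hKdef
  have hK2 : 2 ≤ K := by
    have hsub : ({0, k} : Finset ℕ) ⊆ J := by
      intro a ha
      rcases Finset.mem_insert.mp ha with h | h
      · subst h; exact h0J
      · rw [Finset.mem_singleton.mp h]; exact hkJ
    have := Finset.card_le_card hsub
    rwa [Finset.card_insert_of_notMem (by simp; omega), Finset.card_singleton] at this
  have hKcard : K ≤ 2 * n := by
    have h1 : K ≤ (insert k (S ∪ S.image (· - 1))).card + 1 := Finset.card_insert_le _ _
    have h2 : (insert k (S ∪ S.image (· - 1))).card ≤ (S ∪ S.image (· - 1)).card + 1 :=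
      Finset.card_insert_le _ _
    have h3 : (S ∪ S.image (· - 1)).card ≤ S.card + (S.image (· - 1)).card :=
      Finset.card_union_le _ _
    have h4 : (S.image (· - 1)).card ≤ S.card := Finset.card_image_le
    omega
  set ord := J.orderEmbOfFin (rfl : J.card = K) with hord
  set jf : ℕ → ℕ := fun p => if h : p < K then ord ⟨p, h⟩ else k with hjf
  have hmem : ∀ p, p < K → jf p ∈ J := by
    intro p hp
    simp only [hjf, dif_pos hp]
    exact Finset.orderEmbOfFin_mem _ _ _
  have hmono : ∀ p q, q < K → p < q → jf p < jf q := by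
    intro p q hq hpq
    simp only [hjf, dif_pos hq, dif_pos (lt_trans hpq hq)]
    exact ord.strictMono (by exact hpq)
  have hmono' : ∀ p q, q < K → p ≤ q → jf p ≤ jf q := by
    intro p q hq hpq
    rcases Nat.eq_or_lt_of_le hpq with h | h
    · subst h; exact le_rfl
    · exact le_of_lt (hmono p q hq h)
  have hsurj : ∀ a ∈ J, ∃ p, p < K ∧ jf p = a := by
    intro a ha
    have : a ∈ Set.range ord := by
      rw [Finset.range_orderEmbOfFin]
      exact ha
    obtain ⟨⟨p, hp⟩, hpa⟩ := this
    exact ⟨p, hp, by simp only [hjf, dif_pos (show p < K from hp)]; exact hpa⟩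
  have hj0 : jf 0 = 0 := by
    obtain ⟨q, hq, hq0⟩ := hsurj 0 h0J
    have := hmono' 0 q hq (Nat.zero_le _)
    omega
  have hjlast : jf (K - 1) = k := by
    obtain ⟨q, hq, hq0⟩ := hsurj k hkJ
    have h1 := hmono' q (K - 1) (by omega) (by omega)
    have h2 := hJle _ (hmem (K - 1) (by omega))
    omega
  set m := K - 1 with hmdef
  have hm1 : 1 ≤ m := by omega
  have hmbound : m ≤ 2 * n - 1 := by omega
  set B : ℕ → ℝ := fun p => A (jf p) with hB
  set z : ℕ → ℝ := fun p => ε + (if jf p ∈ S then d (jf p) else 0) with hz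
  refine ⟨m, B, z, hm1, hmbound, ⟨?_, ?_, ?_, ?_, ?_⟩, ?_⟩
  · simp only [hB, hj0, hA0]
  · simp only [hB, hjlast, hAk]
  · intro p hp
    have h1 : jf p < jf (p + 1) := hmono p (p + 1) (by omega) (by omega)
    have h2 : jf (p + 1) ≤ k := hJle _ (hmem (p + 1) (by omega))
    exact hGood.strictAnti _ _ h1 h2
  · intro p hp
    have h1 : jf p < jf (K - 1) := hmono p (K - 1) (by omega) (by omega)
    rw [hjlast] at h1
    exact hpos _ h1
  · intro j h1 h2
    simp only [hz]
    by_cases hjS : jf j ∈ S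
    · have := hd0 _ hjS
      rw [if_pos hjS]; linarith
    · rw [if_neg hjS]; linarith
  · -- the sums agree
    funext i
    set t := (i.val + 2).choose 2 with hT
    have ht : t ≠ 0 := (Nat.choose_pos (by omega)).ne'
    have hsum_i : ∑ j ∈ S, d j * (A (j - 1) ^ t - A j ^ t)
        = ∑ j ∈ Finset.Icc 1 k, (y j - ε) * (A (j - 1) ^ t - A j ^ t) := by
      have := congrFun hdsum i
      simpa [hf, Finset.sum_apply, Pi.smul_apply, smul_eq_mul] using this
    have hteleA : ∑ j ∈ Finset.Icc 1 k, (A (j - 1) ^ t - A j ^ t) = 1 := by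
      have := tele (fun p => A p ^ t) 0 k (by omega)
      simp only [Nat.zero_add] at this
      rw [this, hA0, hAk, one_pow, zero_pow ht, sub_zero]
    have hteleB : ∑ p ∈ Finset.Icc 1 m, (B (p - 1) ^ t - B p ^ t) = 1 := by
      have := tele (fun p => B p ^ t) 0 m (by omega)
      simp only [Nat.zero_add] at this
      rw [this]
      simp only [hB, hj0, hjlast, hA0, hAk]
      rw [one_pow, zero_pow ht, sub_zero]
    -- key: consecutive breakpoints
    have hconsec : ∀ p, 1 ≤ p → p ≤ m → jf p ∈ S → jf (p - 1) = jf p - 1 := by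
      intro p hp1 hpm hpS
      have hj1 : 1 ≤ jf p := (Finset.mem_Icc.mp (hSsub hpS)).1
      obtain ⟨q, hq, hq0⟩ := hsurj (jf p - 1) (hSJ' _ hpS)
      have hqp : q < p := by
        by_contra hcon
        have := hmono' p q hq (by omega)
        omega
      have h1 : jf q ≤ jf (p - 1) := hmono' q (p - 1) (by omega) (by omega)
      have h2 : jf (p - 1) < jf p := hmono (p - 1) p (by omega) (by omega)
      omega
    -- decompose Vv n m B z i
    unfold Vv
    have hdecomp : ∑ p ∈ Finset.Icc 1 m, z p * (B (p - 1) ^ t - B p ^ t)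
        = ε * ∑ p ∈ Finset.Icc 1 m, (B (p - 1) ^ t - B p ^ t)
          + ∑ p ∈ Finset.Icc 1 m,
              (if jf p ∈ S then d (jf p) * (B (p - 1) ^ t - B p ^ t) else 0) := by
      rw [Finset.mul_sum, ← Finset.sum_add_distrib]
      apply Finset.sum_congr rfl
      intro p hp
      simp only [hz]
      by_cases hpS : jf p ∈ S
      · rw [if_pos hpS, if_pos hpS]; ring
      · rw [if_neg hpS, if_neg hpS]; ring
    have hbij : ∑ p ∈ Finset.Icc 1 m,
        (if jf p ∈ S then d (jf p) * (B (p - 1) ^ t - B p ^ t) else 0)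
        = ∑ j ∈ S, d j * (A (j - 1) ^ t - A j ^ t) := by
      rw [← Finset.sum_filter]
      apply Finset.sum_bij (i := fun p _ => jf p)
      · intro p hp
        exact (Finset.mem_filter.mp hp).2
      · intro p hp q hq hpq
        rw [Finset.mem_filter, Finset.mem_Icc] at hp hq
        by_contra hne
        rcases Nat.lt_or_ge p q with h | h
        · have := hmono p q (by omega) h; omega
        · have := hmono q p (by omega) (by omega); omega
      · intro j hjS
        obtain ⟨p, hp, hp0⟩ := hsurj j (hSJ _ hjS)
        have hj1 : 1 ≤ j := (Finset.mem_Icc.mp (hSsub hjS)).1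
        have hp1 : 1 ≤ p := by
          by_contra hcon
          have : p = 0 := by omega
          rw [this] at hp0
          omega
        have hpm : p ≤ m := by omega
        exact ⟨p, Finset.mem_filter.mpr ⟨Finset.mem_Icc.mpr ⟨hp1, hpm⟩, hp0 ▸ hjS⟩, hp0⟩
      · intro p hp
        rw [Finset.mem_filter, Finset.mem_Icc] at hp
        have := hconsec p hp.1.1 hp.1.2 hp.2
        simp only [hB, this]
    rw [hdecomp, hteleB, hbij, hsum_i, mul_one]
    have : ∑ j ∈ Finset.Icc 1 k, y j * (A (j - 1) ^ t - A j ^ t)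
        = ∑ j ∈ Finset.Icc 1 k, (y j - ε) * (A (j - 1) ^ t - A j ^ t)
          + ε * ∑ j ∈ Finset.Icc 1 k, (A (j - 1) ^ t - A j ^ t) := by
      rw [Finset.mul_sum, ← Finset.sum_add_distrib]
      apply Finset.sum_congr rfl
      intro j hj
      ring
    rw [this, hteleA, mul_one]
    ring

/-- For every `n ≥ 2` and every `k ≥ 1`, `C_{n,k} ⊆ C_{n,2n-1}`: the
expected first-coalescence-time vector of a sample of size `n` under any piecewise-constant
demography can be realized with at most `2n - 1` epochs. -/
theorem coal_subset_two_n_sub_one (n k : ℕ) (hn : 2 ≤ n) (hk : 1 ≤ k) :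
    Coal n k ⊆ Coal n (2 * n - 1) := by
  intro c hc
  obtain ⟨x, y, hx, hy, hcx⟩ := hc
  obtain ⟨A, hGood, hchi⟩ := chi_to_V n k hk x y hx hy
  obtain ⟨m, B, z, hm1, hmb, hGB, hVB⟩ := merge n k hn hk A y hGood
  obtain ⟨B', z', hGB', hVB'⟩ := pad n m hm1 (2 * n - 1 - m) B z hGB
  have hm : m + (2 * n - 1 - m) = 2 * n - 1 := by omega
  rw [hm] at hGB' hVB'
  have hmem := mem_of_goodB n (2 * n - 1) (by omega) B' z' hGB'
  have hceq : c = fun i => (1 / ((i.val + 2).choose 2 : ℝ)) * Vv n (2 * n - 1) B' z' i := by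
    rw [hcx, hchi]
    funext i
    rw [hVB', hVB]
  rw [hceq]
  exact hmem
end

section
/- The normalized coalescence manifold Ĉ_{4,2} is not a convex subset of ℝ³. -/
open Finset

/-- The map `χ_{4,k}` (coordinates `m = 2, 3, 4` with `C(m,2) = 1, 3, 6`), with the
convention `x_k = 0` and the empty product equal to `1`. -/
noncomputable def chi4 (k : ℕ) (x y : ℕ → ℝ) : Fin 3 → ℝ :=
  fun i =>
    (1 / ((i.val + 2).choose 2 : ℝ)) *
      ∑ j ∈ Finset.Icc 1 k,
        y j * (∏ l ∈ Finset.Icc 1 (j - 1), x l ^ (i.val + 2).choose 2) *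
          (1 - (if j = k then (0 : ℝ) else x j) ^ (i.val + 2).choose 2)

/-- The coalescence manifold `C_{4,k} ⊆ ℝ³`: the image of `χ_{4,k}` over parameters
`x ∈ (0,1)^{k-1}`, `y ∈ (0,∞)^k`. -/
def Coal4 (k : ℕ) : Set (Fin 3 → ℝ) :=
  { c | ∃ x y : ℕ → ℝ,
      (∀ j, 1 ≤ j → j ≤ k - 1 → 0 < x j ∧ x j < 1) ∧
      (∀ j, 1 ≤ j → j ≤ k → 0 < y j) ∧
      c = chi4 k x y }

/-- The normalized coalescence manifold `Ĉ_{4,k}`. -/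
def CoalHat4 (k : ℕ) : Set (Fin 3 → ℝ) :=
  { v | ∃ c ∈ Coal4 k, v = (c 0 + c 1 + c 2)⁻¹ • c }

/-- The affine hyperplane `H = {v ∈ ℝ³ : v₁ + v₂ + v₃ = 1}`. -/
def H3 : Set (Fin 3 → ℝ) := { v | v 0 + v 1 + v 2 = 1 }

/-- The interior of a set `S`, relative to the affine hyperplane `H3` equipped with its
subspace topology, viewed again as a subset of `ℝ³`. -/
def relIntH3 (S : Set (Fin 3 → ℝ)) : Set (Fin 3 → ℝ) :=
  (fun v : H3 => (v : Fin 3 → ℝ)) '' interior { v : H3 | (v : Fin 3 → ℝ) ∈ S }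

lemma chi4_two_eval (x y : ℕ → ℝ) (i : Fin 3) :
    chi4 2 x y i = (1 / ((i.val + 2).choose 2 : ℝ)) *
      (y 1 * (1 - x 1 ^ (i.val + 2).choose 2) + y 2 * x 1 ^ (i.val + 2).choose 2) := by
  have hne : (i.val + 2).choose 2 ≠ 0 := by
    have : 0 < (i.val + 2).choose 2 := Nat.choose_pos (by omega)
    omega
  have h12 : Finset.Icc 1 2 = ({1, 2} : Finset ℕ) := by decide
  simp [chi4, h12, zero_pow hne]

/-- The normalized coalescence manifold `Ĉ_{4,2}` is not a convex subset
of `ℝ³`. -/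
theorem coalHat_four_two_not_convex : ¬ Convex ℝ (CoalHat4 2) := by
  intro hconv
  have hp : (![1412/2355, 1844/7065, 197/1413] : Fin 3 → ℝ) ∈ CoalHat4 2 := by
    refine ⟨chi4 2 (fun _ => 1/2) (fun j => if j = 1 then 497/288 else 209/288),
      ⟨(fun _ => 1/2), (fun j => if j = 1 then 497/288 else 209/288), ?_, ?_, rfl⟩, ?_⟩
    · intro j h1 h2; norm_num
    · intro j h1 h2; dsimp only; split <;> norm_num
    · funext i; fin_cases i <;>
        simp [chi4_two_eval, Pi.smul_apply] <;> norm_num [Nat.choose]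
  have hq : (![19232/25905, 13472/77715, 6547/77715] : Fin 3 → ℝ) ∈ CoalHat4 2 := by
    refine ⟨chi4 2 (fun _ => 1/4) (fun j => if j = 1 then 13088 else 37664),
      ⟨(fun _ => 1/4), (fun j => if j = 1 then 13088 else 37664), ?_, ?_, rfl⟩, ?_⟩
    · intro j h1 h2; norm_num
    · intro j h1 h2; dsimp only; split <;> norm_num
    · funext i; fin_cases i <;>
        simp [chi4_two_eval, Pi.smul_apply] <;> norm_num [Nat.choose]
  have hm := hconv hp hq (by norm_num : (0:ℝ) ≤ 1/2) (by norm_num : (0:ℝ) ≤ 1/2)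
    (by norm_num : (1/2 : ℝ) + 1/2 = 1)
  obtain ⟨c, ⟨x, y, hx, hy, hc⟩, hmeq⟩ := hm
  set X := x 1 with hXdef
  set A := y 1 with hAdef
  set B := y 2 with hBdef
  obtain ⟨hX0, hX1⟩ := hx 1 le_rfl (by norm_num)
  have hA0 : 0 < A := hy 1 le_rfl (by norm_num)
  have hB0 : 0 < B := hy 2 (by norm_num) le_rfl
  have hc0 : c 0 = A * (1 - X) + B * X := by
    rw [hc, chi4_two_eval]; norm_num [Nat.choose]; rfl
  have hc1 : c 1 = (A * (1 - X^3) + B * X^3) / 3 := by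
    rw [hc, chi4_two_eval]; norm_num [Nat.choose]; ring
  have hc2 : c 2 = (A * (1 - X^6) + B * X^6) / 6 := by
    rw [hc, chi4_two_eval]; norm_num [Nat.choose]; ring
  set S := c 0 + c 1 + c 2 with hSdef
  have hX3 : X^3 < 1 := pow_lt_one₀ hX0.le hX1 (by norm_num)
  have hX6 : X^6 < 1 := pow_lt_one₀ hX0.le hX1 (by norm_num)
  have hX3p : 0 < X^3 := pow_pos hX0 3
  have hX6p : 0 < X^6 := pow_pos hX0 6
  have hS : 0 < S := by
    rw [hSdef, hc0, hc1, hc2]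
    nlinarith [mul_pos hA0 (sub_pos.mpr hX1), mul_pos hB0 hX0,
      mul_pos hA0 (sub_pos.mpr hX3), mul_pos hB0 hX3p,
      mul_pos hA0 (sub_pos.mpr hX6), mul_pos hB0 hX6p]
  have e0 : c 0 = (5794/8635) * S := by
    have h := congrFun hmeq 0
    simp [Pi.smul_apply] at h
    norm_num at h
    field_simp at h
    linarith [h]
  have e1 : c 1 = (5626/25905) * S := by
    have h := congrFun hmeq 1
    simp [Pi.smul_apply] at h
    norm_num at h
    field_simp at h
    linarith [h]
  -- From 6 c 2 - c 0 = (B - A) * (X^6 - X) and 6 m2 - m0 = 0 we get B = A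
  have e2 : c 2 = (2897/25905) * S := by
    have h := congrFun hmeq 2
    simp [Pi.smul_apply] at h
    norm_num at h
    field_simp at h
    linarith [h]
  have key : (B - A) * (X^6 - X) = 0 := by
    have : (B - A) * (X^6 - X) = 6 * c 2 - c 0 := by rw [hc0, hc2]; ring
    rw [this, e0, e2]; ring
  have hXneg : X^6 - X < 0 := by
    have h5 : X^5 < 1 := pow_lt_one₀ hX0.le hX1 (by norm_num)
    nlinarith [mul_pos hX0 (sub_pos.mpr h5)]
  have hBA : B = A := by
    rcases mul_eq_zero.mp key with h | h
    · linarith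
    · linarith
  have key2 : (B - A) * (X^3 - X) = 3 * c 1 - c 0 := by rw [hc0, hc1]; ring
  rw [hBA] at key2
  have : 3 * c 1 - c 0 = 0 := by rw [← key2]; ring
  rw [e0, e1] at this
  nlinarith
end

section
/- For (x₁, x₂) ∈ (0,1)², let S(x₁,x₂) = x₁(1−x₂) + x₁³(1−x₂³)/3 + x₁⁶(1−x₂⁶)/6 and define f : (0,1)² → ℝ² by f(x₁,x₂) = ( x₁(1−x₂)/S(x₁,x₂), x₁³(1−x₂³)/(3 S(x₁,x₂)) ). Then the Jacobian determinant of f at (x₁,x₂) equals −(1/(6 S(x₁,x₂)³)) · x₁⁹ (x₂−1)⁴ (x₂² + x₂ + 1)(x₂² + 3x₂ + 1), and in particular it is nonzero at every point of (0,1)². -/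
/-- `S(x₁, x₂) = x₁(1−x₂) + x₁³(1−x₂³)/3 + x₁⁶(1−x₂⁶)/6`, the sum of the coordinates of the
vector `(x₁(1−x₂), x₁³(1−x₂³)/3, x₁⁶(1−x₂⁶)/6)`. -/
noncomputable def Ssum (p : Fin 2 → ℝ) : ℝ :=
  p 0 * (1 - p 1) + p 0 ^ 3 * (1 - p 1 ^ 3) / 3 + p 0 ^ 6 * (1 - p 1 ^ 6) / 6

/-- `f(x₁, x₂) = (x₁(1−x₂)/S, x₁³(1−x₂³)/(3S))`: the first two coordinates of the
`ℓ₁`-normalization of the vector `(x₁(1−x₂), x₁³(1−x₂³)/3, x₁⁶(1−x₂⁶)/6)`. -/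
noncomputable def fmap (p : Fin 2 → ℝ) : Fin 2 → ℝ :=
  ![p 0 * (1 - p 1) / Ssum p, p 0 ^ 3 * (1 - p 1 ^ 3) / (3 * Ssum p)]

set_option maxHeartbeats 1000000 in
open ContinuousLinearMap in
/-- On `(0,1)²` the Jacobian determinant of `f` equals
`−(1/(6S³)) x₁⁹ (x₂−1)⁴ (x₂² + x₂ + 1)(x₂² + 3x₂ + 1)`, and in particular it is nonzero at
every point of `(0,1)²`. -/
theorem jacobian_formula (p : Fin 2 → ℝ)
    (h0 : 0 < p 0) (h0' : p 0 < 1) (h1 : 0 < p 1) (h1' : p 1 < 1) :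
    (fderiv ℝ fmap p).det =
        -(1 / (6 * Ssum p ^ 3)) * p 0 ^ 9 * (p 1 - 1) ^ 4 *
          (p 1 ^ 2 + p 1 + 1) * (p 1 ^ 2 + 3 * p 1 + 1) ∧
      (fderiv ℝ fmap p).det ≠ 0 := by
  have hv3 : p 1 ^ 3 < 1 := pow_lt_one₀ h1.le h1' (by norm_num)
  have hv6 : p 1 ^ 6 < 1 := pow_lt_one₀ h1.le h1' (by norm_num)
  have hS : 0 < Ssum p := by
    unfold Ssum
    have t1 : 0 < p 0 * (1 - p 1) := mul_pos h0 (by linarith)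
    have t2 : 0 ≤ p 0 ^ 3 * (1 - p 1 ^ 3) / 3 :=
      div_nonneg (mul_nonneg (pow_pos h0 3).le (by linarith)) (by norm_num)
    have t3 : 0 ≤ p 0 ^ 6 * (1 - p 1 ^ 6) / 6 :=
      div_nonneg (mul_nonneg (pow_pos h0 6).le (by linarith)) (by norm_num)
    linarith
  have h3S : (0:ℝ) < 3 * Ssum p := by linarith
  have hu : HasFDerivAt (fun q : Fin 2 → ℝ => q 0) (proj 0 : (Fin 2 → ℝ) →L[ℝ] ℝ) p := by
    exact hasFDerivAt_apply 0 p
  have hv : HasFDerivAt (fun q : Fin 2 → ℝ => q 1) (proj 1 : (Fin 2 → ℝ) →L[ℝ] ℝ) p := by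
    exact hasFDerivAt_apply 1 p
  have hu3 : HasFDerivAt (fun q : Fin 2 → ℝ => q 0 ^ 3) _ p :=
    ((hasDerivAt_pow 3 (p 0)).comp_hasFDerivAt p hu :)
  have hu6 : HasFDerivAt (fun q : Fin 2 → ℝ => q 0 ^ 6) _ p :=
    ((hasDerivAt_pow 6 (p 0)).comp_hasFDerivAt p hu :)
  have hv3' : HasFDerivAt (fun q : Fin 2 → ℝ => q 1 ^ 3) _ p :=
    ((hasDerivAt_pow 3 (p 1)).comp_hasFDerivAt p hv :)
  have hv6' : HasFDerivAt (fun q : Fin 2 → ℝ => q 1 ^ 6) _ p :=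
    ((hasDerivAt_pow 6 (p 1)).comp_hasFDerivAt p hv :)
  have hA : HasFDerivAt (fun q : Fin 2 → ℝ => q 0 * (1 - q 1)) _ p :=
    hu.mul ((hasFDerivAt_const (1:ℝ) p).sub hv)
  have hB : HasFDerivAt (fun q : Fin 2 → ℝ => q 0 ^ 3 * (1 - q 1 ^ 3)) _ p :=
    hu3.mul ((hasFDerivAt_const (1:ℝ) p).sub hv3')
  have hC : HasFDerivAt (fun q : Fin 2 → ℝ => q 0 ^ 6 * (1 - q 1 ^ 6)) _ p :=
    hu6.mul ((hasFDerivAt_const (1:ℝ) p).sub hv6')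
  have hSd : HasFDerivAt Ssum _ p :=
    (((hA.add (hB.mul_const (3:ℝ)⁻¹)).add (hC.mul_const (6:ℝ)⁻¹)).congr_of_eventuallyEq
      (Filter.Eventually.of_forall fun q => by unfold Ssum; simp only [Pi.add_apply]; ring))
  have hSinv : HasFDerivAt (fun q : Fin 2 → ℝ => (Ssum q)⁻¹) _ p :=
    (hasDerivAt_inv hS.ne').comp_hasFDerivAt p hSd
  have h3Sinv : HasFDerivAt (fun q : Fin 2 → ℝ => (3 * Ssum q)⁻¹) _ p :=
    (hasDerivAt_inv h3S.ne').comp_hasFDerivAt p (hSd.const_mul 3)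
  have hc0 : HasFDerivAt (fun q : Fin 2 → ℝ => q 0 * (1 - q 1) / Ssum q) _ p :=
    (hA.mul hSinv).congr_of_eventuallyEq
      (Filter.Eventually.of_forall fun q => div_eq_mul_inv _ _)
  have hc1 : HasFDerivAt (fun q : Fin 2 → ℝ => q 0 ^ 3 * (1 - q 1 ^ 3) / (3 * Ssum q)) _ p :=
    (hB.mul h3Sinv).congr_of_eventuallyEq
      (Filter.Eventually.of_forall fun q => div_eq_mul_inv _ _)
  have hdiffi : ∀ i, DifferentiableAt ℝ (fun q => fmap q i) p := by
    intro i
    fin_cases i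
    · simpa only [fmap, Fin.zero_eta, Matrix.cons_val_zero] using hc0.differentiableAt
    · simpa only [fmap, Fin.mk_one, Matrix.cons_val_one, Matrix.head_cons, Matrix.cons_val_fin_one] using hc1.differentiableAt
  have hrw : fderiv ℝ fmap p = ContinuousLinearMap.pi (fun i => fderiv ℝ (fun q => fmap q i) p) :=
    fderiv_pi hdiffi
  have hdet : (fderiv ℝ fmap p).det =
      (fderiv ℝ fmap p) (Pi.single 0 1) 0 * (fderiv ℝ fmap p) (Pi.single 1 1) 1 -
        (fderiv ℝ fmap p) (Pi.single 1 1) 0 * (fderiv ℝ fmap p) (Pi.single 0 1) 1 := by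
    rw [ContinuousLinearMap.det, ← LinearMap.det_toMatrix (Pi.basisFun ℝ (Fin 2)),
      Matrix.det_fin_two]
    simp [LinearMap.toMatrix_apply]
  have he0 : fderiv ℝ (fun q : Fin 2 → ℝ => fmap q 0) p = _ := hc0.fderiv
  have he1 : fderiv ℝ (fun q : Fin 2 → ℝ => fmap q 1) p = _ := hc1.fderiv
  have key : (fderiv ℝ fmap p).det =
      -(1 / (6 * Ssum p ^ 3)) * p 0 ^ 9 * (p 1 - 1) ^ 4 *
        (p 1 ^ 2 + p 1 + 1) * (p 1 ^ 2 + 3 * p 1 + 1) := by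
    rw [hdet, hrw]
    simp only [ContinuousLinearMap.pi_apply]
    rw [he0, he1]
    simp only [ContinuousLinearMap.add_apply, ContinuousLinearMap.smul_apply,
      ContinuousLinearMap.sub_apply, ContinuousLinearMap.zero_apply, proj_apply,
      smul_eq_mul, Pi.single_eq_same, Pi.single_eq_of_ne (by decide : (1:Fin 2) ≠ 0),
      Pi.single_eq_of_ne (by decide : (0:Fin 2) ≠ 1)]
    norm_num
    have hSne : p 0 * (1 - p 1) + p 0 ^ 3 * (1 - p 1 ^ 3) / 3 + p 0 ^ 6 * (1 - p 1 ^ 6) / 6 ≠ 0 := by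
      have h := hS.ne'; unfold Ssum at h; exact h
    simp only [Ssum]
    have hD : ((p 0 * (1 - p 1) * 3 + p 0 ^ 3 * (1 - p 1 ^ 3)) * 6 + p 0 ^ 6 * (1 - p 1 ^ 6) * 3) ≠ 0 := by
      have h18 : ((p 0 * (1 - p 1) * 3 + p 0 ^ 3 * (1 - p 1 ^ 3)) * 6 + p 0 ^ 6 * (1 - p 1 ^ 6) * 3)
          = 18 * Ssum p := by unfold Ssum; ring
      rw [h18]
      exact (mul_pos (by norm_num) hS).ne'
    have hE : ((1 - p 1) * 3 + p 0 ^ 2 * (1 - p 1 ^ 3)) * 6 + p 0 ^ 5 * 3 * (1 - p 1 ^ 6) ≠ 0 := by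
      intro h; apply hD; linear_combination p 0 * h
    field_simp [hD, hE]
    ring
  have hne : -(1 / (6 * Ssum p ^ 3)) * p 0 ^ 9 * (p 1 - 1) ^ 4 *
      (p 1 ^ 2 + p 1 + 1) * (p 1 ^ 2 + 3 * p 1 + 1) ≠ 0 := by
    have h6 : (0:ℝ) < 6 * Ssum p ^ 3 := mul_pos (by norm_num) (pow_pos hS 3)
    have h₁ : -(1 / (6 * Ssum p ^ 3)) ≠ 0 := neg_ne_zero.mpr (one_div_pos.mpr h6).ne'
    have h₂ : p 0 ^ 9 ≠ 0 := (pow_pos h0 9).ne'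
    have h₃ : (p 1 - 1) ^ 4 ≠ 0 := pow_ne_zero 4 (by linarith)
    have h₄ : p 1 ^ 2 + p 1 + 1 ≠ 0 := by nlinarith [sq_nonneg (p 1)]
    have h₅ : p 1 ^ 2 + 3 * p 1 + 1 ≠ 0 := by nlinarith [sq_nonneg (p 1)]
    exact mul_ne_zero (mul_ne_zero (mul_ne_zero (mul_ne_zero h₁ h₂) h₃) h₄) h₅
  exact ⟨key, key ▸ hne⟩
end
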